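/- arXiv:1111.3252 — 2 statements merged into one kernel-verified Lean document; each statement's English description precedes it below -/
import Mathlib

section
/- The only Kneser graphs K_{n:k} with n ≥ 2k+1 and determining number 3 are K_{4:1}, K_{5:2}, and K_{7:3}. -/
/-- A set `S` of vertices is a determining set of `G` if any two automorphisms
agreeing on `S` are equal. -/
def IsDeterminingSet {V : Type*} (G : SimpleGraph V) (S : Set V) : Prop :=
  ∀ g h : G ≃g G, (∀ v ∈ S, g v = h v) → g = h

/-- The determining number of a graph: the minimum cardinality of a determining set. -/
noncomputable def detNumber {V : Type*} (G : SimpleGraph V) : ℕ :=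
  sInf {m | ∃ S : Finset V, S.card = m ∧ IsDeterminingSet G (S : Set V)}

/-- The Kneser graph `K_{n:k}`: vertices are the `k`-subsets of `[n]`,
edges join disjoint sets. -/
def kneserGraph (n k : ℕ) : SimpleGraph {s : Finset (Fin n) // s.card = k} where
  Adj a b := Disjoint (a : Finset (Fin n)) (b : Finset (Fin n)) ∧ a ≠ b
  symm := ⟨fun a b h => ⟨h.1.symm, h.2.symm⟩⟩
  loopless := ⟨fun a h => h.2 rfl⟩

set_option linter.unusedVariables false

instance (n k : ℕ) : DecidableRel (kneserGraph n k).Adj :=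
  fun a b => instDecidableAnd

abbrev KV (n k : ℕ) := {s : Finset (Fin n) // s.card = k}

/-! ### walk2 and the fixing step -/

def walk2 {V : Type*} (G : SimpleGraph V) (u v : V) : Prop := ∃ w, G.Adj u w ∧ G.Adj w v

instance {V : Type*} [Fintype V] (G : SimpleGraph V) [DecidableRel G.Adj] :
    DecidableRel (walk2 G) := fun _ _ => Fintype.decidableExistsFintype

lemma iso_fixed_adj {V : Type*} {G : SimpleGraph V} (f : G ≃g G) {u : V} (hu : f u = u)
    (v : V) : G.Adj u (f v) ↔ G.Adj u v := by
  conv_lhs => rw [← hu]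
  exact f.map_adj_iff

lemma iso_walk2 {V : Type*} {G : SimpleGraph V} (f : G ≃g G) (u v : V) :
    walk2 G (f u) (f v) ↔ walk2 G u v := by
  constructor
  · rintro ⟨w, h1, h2⟩
    exact ⟨f.symm w, by simpa using ⟨(by rw [← f.map_adj_iff, f.apply_symm_apply] ; exact h1),
      (by rw [← f.map_adj_iff, f.apply_symm_apply]; exact h2)⟩⟩
  · rintro ⟨w, h1, h2⟩
    exact ⟨f w, f.map_adj_iff.mpr h1, f.map_adj_iff.mpr h2⟩

lemma iso_fixed_walk2 {V : Type*} {G : SimpleGraph V} (f : G ≃g G) {u : V} (hu : f u = u)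
    (v : V) : walk2 G u (f v) ↔ walk2 G u v := by
  conv_lhs => rw [← hu]
  exact iso_walk2 f u v

lemma fix_step {V : Type*} {G : SimpleGraph V} (f : G ≃g G) (Lfix Lpat : List V)
    (hsub : ∀ u ∈ Lpat, u ∈ Lfix) (hfix : ∀ u ∈ Lfix, f u = u) (v : V)
    (huniq : ∀ w, w ∉ Lfix →
      (∀ u ∈ Lpat, ((G.Adj u w ↔ G.Adj u v) ∧ (walk2 G u w ↔ walk2 G u v))) → w = v) :
    f v = v := by
  by_cases hm : f v ∈ Lfix
  · exact f.injective (hfix _ hm)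
  · refine huniq (f v) hm ?_
    intro u hu
    have hu' := hfix u (hsub u hu)
    exact ⟨iso_fixed_adj f hu' v, iso_fixed_walk2 f hu' v⟩

/-! ### permutation-induced automorphisms -/

def permAut (n k : ℕ) (σ : Equiv.Perm (Fin n)) : kneserGraph n k ≃g kneserGraph n k where
  toFun s := ⟨s.1.image σ, by rw [Finset.card_image_of_injective _ σ.injective, s.2]⟩
  invFun s := ⟨s.1.image σ.symm, by rw [Finset.card_image_of_injective _ σ.symm.injective, s.2]⟩
  left_inv s := Subtype.ext (by simp [Finset.image_image])
  right_inv s := Subtype.ext (by simp [Finset.image_image])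
  map_rel_iff' := by
    intro a b
    simp only [kneserGraph, Equiv.coe_fn_mk, ne_eq, Subtype.mk.injEq]
    rw [Finset.disjoint_image σ.injective]
    have : a.1.image σ = b.1.image σ ↔ a.1 = b.1 :=
      ⟨fun h => Finset.image_injective σ.injective h, fun h => by rw [h]⟩
    rw [this, Subtype.ext_iff]

lemma image_swap_eq_self {n : ℕ} {x y : Fin n} {s : Finset (Fin n)}
    (h : x ∈ s ↔ y ∈ s) : s.image (Equiv.swap x y) = s := by
  ext z
  simp only [Finset.mem_image]
  constructor
  · rintro ⟨a, ha, rfl⟩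
    rcases eq_or_ne a x with rfl | hax
    · rwa [Equiv.swap_apply_left, ← h]
    rcases eq_or_ne a y with rfl | hay
    · rwa [Equiv.swap_apply_right, h]
    · rwa [Equiv.swap_apply_of_ne_of_ne hax hay]
  · intro hz
    refine ⟨Equiv.swap x y z, ?_, Equiv.swap_apply_self x y z⟩
    rcases eq_or_ne z x with rfl | hzx
    · rwa [Equiv.swap_apply_left, ← h]
    rcases eq_or_ne z y with rfl | hzy
    · rwa [Equiv.swap_apply_right, h]
    · rwa [Equiv.swap_apply_of_ne_of_ne hzx hzy]

/-- a vertex containing x but not y -/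
lemma exists_vertex_sep {n k : ℕ} (hk : 1 ≤ k) (hkn : k + 1 ≤ n) {x y : Fin n} (hxy : x ≠ y) :
    ∃ s : KV n k, x ∈ s.1 ∧ y ∉ s.1 := by
  have hcard : k - 1 ≤ ((Finset.univ : Finset (Fin n)) \ {x, y}).card := by
    have h2 : ({x, y} : Finset (Fin n)).card ≤ 2 := Finset.card_insert_le _ _ |>.trans (by simp)
    have := Finset.le_card_sdiff ({x, y} : Finset (Fin n)) Finset.univ
    have hu : (Finset.univ : Finset (Fin n)).card = n := Finset.card_univ.trans (Fintype.card_fin n)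
    omega
  obtain ⟨t, hts, htc⟩ := Finset.exists_subset_card_eq hcard
  have hxt : x ∉ t := fun hx => by simpa using hts hx
  have hyt : y ∉ t := fun hy => by simpa using hts hy
  refine ⟨⟨insert x t, by rw [Finset.card_insert_of_notMem hxt, htc]; omega⟩, by simp, ?_⟩
  simp only [Finset.mem_insert]
  rintro (rfl | hy)
  · exact hxy rfl
  · exact hyt hy

lemma swap_fixes_vertex {n k : ℕ} {x y : Fin n} {v : KV n k}
    (h : x ∈ v.1 ↔ y ∈ v.1) : permAut n k (Equiv.swap x y) v = v :=
  Subtype.ext (image_swap_eq_self h)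

lemma not_det_of_swap {n k : ℕ} (hk : 1 ≤ k) (hkn : k + 1 ≤ n) {x y : Fin n} (hxy : x ≠ y)
    (S : Set (KV n k)) (hfix : ∀ v ∈ S, (x ∈ v.1 ↔ y ∈ v.1)) :
    ¬ IsDeterminingSet (kneserGraph n k) S := by
  intro hdet
  have heq := hdet (permAut n k (Equiv.swap x y)) (RelIso.refl _)
    (fun v hv => swap_fixes_vertex (hfix v hv))
  obtain ⟨s, hxs, hys⟩ := exists_vertex_sep hk hkn hxy
  have := DFunLike.congr_fun heq s
  have hmem : y ∈ (permAut n k (Equiv.swap x y) s).1 := by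
    simp only [permAut, RelIso.coe_fn_mk, Equiv.coe_fn_mk, Finset.mem_image]
    exact ⟨x, hxs, Equiv.swap_apply_left x y⟩
  rw [this] at hmem
  exact hys hmem

/-! ### pigeonhole: if all membership patterns w.r.t. A,B,C are distinct -/

section pigeon
variable {n : ℕ} (A B C : Finset (Fin n))

lemma sum_indicator_card (A : Finset (Fin n)) :
    (∑ x : Fin n, (if x ∈ A then (1:ℕ) else 0)) = A.card := by
  rw [Finset.sum_ite_mem, Finset.univ_inter, Finset.sum_const, smul_eq_mul, mul_one]

lemma pigeon3
    (h : ∀ x y : Fin n, (x ∈ A ↔ y ∈ A) → (x ∈ B ↔ y ∈ B) → (x ∈ C ↔ y ∈ C) → x = y) :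
    2 * n ≤ A.card + B.card + C.card + 5 := by
  classical
  set w : Fin n → ℕ := fun x =>
    (if x ∈ A then 1 else 0) + (if x ∈ B then 1 else 0) + (if x ∈ C then 1 else 0) with hw
  set T0 : Finset (Fin n) := Finset.univ.filter (fun x => x ∉ A ∧ x ∉ B ∧ x ∉ C) with hT0
  set SA : Finset (Fin n) := Finset.univ.filter (fun x => x ∈ A ∧ x ∉ B ∧ x ∉ C) with hSA
  set SB : Finset (Fin n) := Finset.univ.filter (fun x => x ∉ A ∧ x ∈ B ∧ x ∉ C) with hSB
  set SC : Finset (Fin n) := Finset.univ.filter (fun x => x ∉ A ∧ x ∉ B ∧ x ∈ C) with hSC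
  have hT0c : T0.card ≤ 1 := Finset.card_le_one.mpr (by
    intro a ha b hb
    simp only [hT0, Finset.mem_filter] at ha hb
    exact h a b (by tauto) (by tauto) (by tauto))
  have hSAc : SA.card ≤ 1 := Finset.card_le_one.mpr (by
    intro a ha b hb
    simp only [hSA, Finset.mem_filter] at ha hb
    exact h a b (by tauto) (by tauto) (by tauto))
  have hSBc : SB.card ≤ 1 := Finset.card_le_one.mpr (by
    intro a ha b hb
    simp only [hSB, Finset.mem_filter] at ha hb
    exact h a b (by tauto) (by tauto) (by tauto))
  have hSCc : SC.card ≤ 1 := Finset.card_le_one.mpr (by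
    intro a ha b hb
    simp only [hSC, Finset.mem_filter] at ha hb
    exact h a b (by tauto) (by tauto) (by tauto))
  have hpt : ∀ x : Fin n, 2 ≤ w x + 2 * (if x ∈ T0 then 1 else 0) +
      (if x ∈ SA then 1 else 0) + (if x ∈ SB then 1 else 0) + (if x ∈ SC then 1 else 0) := by
    intro x
    simp only [hw, hT0, hSA, hSB, hSC, Finset.mem_filter, Finset.mem_univ, true_and]
    by_cases hA : x ∈ A <;> by_cases hB : x ∈ B <;> by_cases hC : x ∈ C <;> simp [hA, hB, hC]
  have hsum : ∑ x : Fin n, (w x + 2 * (if x ∈ T0 then 1 else 0) +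
      (if x ∈ SA then 1 else 0) + (if x ∈ SB then 1 else 0) + (if x ∈ SC then 1 else 0))
      = (A.card + B.card + C.card) + 2 * T0.card + SA.card + SB.card + SC.card := by
    simp only [hw, Finset.sum_add_distrib, ← Finset.mul_sum]
    rw [sum_indicator_card A, sum_indicator_card B, sum_indicator_card C,
      sum_indicator_card T0, sum_indicator_card SA, sum_indicator_card SB, sum_indicator_card SC]
  have h2n : 2 * n ≤ (A.card + B.card + C.card) + 2 * T0.card + SA.card + SB.card + SC.card := by
    rw [← hsum]
    calc 2 * n = ∑ _x : Fin n, 2 := by simp [Finset.sum_const, Finset.card_univ, mul_comm]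
    _ ≤ _ := Finset.sum_le_sum (fun x _ => hpt x)
  omega

lemma pigeon2
    (h : ∀ x y : Fin n, (x ∈ A ↔ y ∈ A) → (x ∈ B ↔ y ∈ B) → x = y) :
    2 * n ≤ A.card + B.card + 4 := by
  classical
  set w : Fin n → ℕ := fun x =>
    (if x ∈ A then 1 else 0) + (if x ∈ B then 1 else 0) with hw
  set T0 : Finset (Fin n) := Finset.univ.filter (fun x => x ∉ A ∧ x ∉ B) with hT0
  set SA : Finset (Fin n) := Finset.univ.filter (fun x => x ∈ A ∧ x ∉ B) with hSA
  set SB : Finset (Fin n) := Finset.univ.filter (fun x => x ∉ A ∧ x ∈ B) with hSB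
  have hT0c : T0.card ≤ 1 := Finset.card_le_one.mpr (by
    intro a ha b hb
    simp only [hT0, Finset.mem_filter] at ha hb
    exact h a b (by tauto) (by tauto))
  have hSAc : SA.card ≤ 1 := Finset.card_le_one.mpr (by
    intro a ha b hb
    simp only [hSA, Finset.mem_filter] at ha hb
    exact h a b (by tauto) (by tauto))
  have hSBc : SB.card ≤ 1 := Finset.card_le_one.mpr (by
    intro a ha b hb
    simp only [hSB, Finset.mem_filter] at ha hb
    exact h a b (by tauto) (by tauto))
  have hpt : ∀ x : Fin n, 2 ≤ w x + 2 * (if x ∈ T0 then 1 else 0) +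
      (if x ∈ SA then 1 else 0) + (if x ∈ SB then 1 else 0) := by
    intro x
    simp only [hw, hT0, hSA, hSB, Finset.mem_filter, Finset.mem_univ, true_and]
    by_cases hA : x ∈ A <;> by_cases hB : x ∈ B <;> simp [hA, hB]
  have hsum : ∑ x : Fin n, (w x + 2 * (if x ∈ T0 then 1 else 0) +
      (if x ∈ SA then 1 else 0) + (if x ∈ SB then 1 else 0))
      = (A.card + B.card) + 2 * T0.card + SA.card + SB.card := by
    simp only [hw, Finset.sum_add_distrib, ← Finset.mul_sum]
    rw [sum_indicator_card A, sum_indicator_card B,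
      sum_indicator_card T0, sum_indicator_card SA, sum_indicator_card SB]
  have h2n : 2 * n ≤ (A.card + B.card) + 2 * T0.card + SA.card + SB.card := by
    rw [← hsum]
    calc 2 * n = ∑ _x : Fin n, 2 := by simp [Finset.sum_const, Finset.card_univ, mul_comm]
    _ ≤ _ := Finset.sum_le_sum (fun x _ => hpt x)
  omega

end pigeon

/-! ### covers of small finsets -/

lemma cover3 {α : Type*} (v0 : α) (S : Finset α) (h : S.card ≤ 3) :
    ∃ A B C : α, ∀ v ∈ S, v = A ∨ v = B ∨ v = C := by
  have hlen : S.toList.length ≤ 3 := by rw [Finset.length_toList]; exact h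
  have hmem : ∀ v ∈ S, v ∈ S.toList := fun v hv => (Finset.mem_toList).mpr hv
  rcases hl : S.toList with _ | ⟨a, _ | ⟨b, _ | ⟨c, _ | ⟨d, l⟩⟩⟩⟩
  · exact ⟨v0, v0, v0, fun v hv => by simpa [hl] using hmem v hv⟩
  · exact ⟨a, a, a, fun v hv => by simpa [hl] using hmem v hv⟩
  · exact ⟨a, b, b, fun v hv => by
      have := hmem v hv; rw [hl] at this; simpa using this⟩
  · exact ⟨a, b, c, fun v hv => by
      have := hmem v hv; rw [hl] at this; simpa using this⟩
  · exfalso; rw [hl] at hlen; simp at hlen; omega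

lemma cover2 {α : Type*} (v0 : α) (S : Finset α) (h : S.card ≤ 2) :
    ∃ A B : α, ∀ v ∈ S, v = A ∨ v = B := by
  have hlen : S.toList.length ≤ 2 := by rw [Finset.length_toList]; exact h
  have hmem : ∀ v ∈ S, v ∈ S.toList := fun v hv => (Finset.mem_toList).mpr hv
  rcases hl : S.toList with _ | ⟨a, _ | ⟨b, _ | ⟨c, l⟩⟩⟩
  · exact ⟨v0, v0, fun v hv => by simpa [hl] using hmem v hv⟩
  · exact ⟨a, a, fun v hv => by simpa [hl] using hmem v hv⟩
  · exact ⟨a, b, fun v hv => by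
      have := hmem v hv; rw [hl] at this; simpa using this⟩
  · exfalso; rw [hl] at hlen; simp at hlen

lemma exists_vertex (n k : ℕ) (hkn : k ≤ n) : Nonempty (KV n k) := by
  obtain ⟨t, _, htc⟩ := Finset.exists_subset_card_eq
    (show k ≤ (Finset.univ : Finset (Fin n)).card by simpa using hkn)
  exact ⟨⟨t, htc⟩⟩

/-! ### no small determining sets -/

lemma nodet3 {n k : ℕ} (hk : 1 ≤ k) (hn : 2 * k + 1 ≤ n) (hlt : 3 * k + 5 < 2 * n)
    (S : Finset (KV n k)) (hS : S.card ≤ 3) :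
    ¬ IsDeterminingSet (kneserGraph n k) (S : Set (KV n k)) := by
  obtain ⟨v0⟩ := exists_vertex n k (by omega)
  obtain ⟨A, B, C, hcov⟩ := cover3 v0 S hS
  have hP : ¬ (∀ x y : Fin n, (x ∈ A.1 ↔ y ∈ A.1) → (x ∈ B.1 ↔ y ∈ B.1) →
      (x ∈ C.1 ↔ y ∈ C.1) → x = y) := by
    intro hinj
    have := pigeon3 A.1 B.1 C.1 hinj
    rw [A.2, B.2, C.2] at this
    omega
  push_neg at hP
  obtain ⟨x, y, hxA, hxB, hxC, hxy⟩ := hP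
  refine not_det_of_swap hk (by omega) hxy _ ?_
  intro v hv
  rcases hcov v hv with rfl | rfl | rfl
  exacts [hxA, hxB, hxC]

lemma nodet2 {n k : ℕ} (hk : 1 ≤ k) (hn : 2 * k + 1 ≤ n) (hlt : 2 * k + 4 < 2 * n)
    (S : Finset (KV n k)) (hS : S.card ≤ 2) :
    ¬ IsDeterminingSet (kneserGraph n k) (S : Set (KV n k)) := by
  obtain ⟨v0⟩ := exists_vertex n k (by omega)
  obtain ⟨A, B, hcov⟩ := cover2 v0 S hS
  have hP : ¬ (∀ x y : Fin n, (x ∈ A.1 ↔ y ∈ A.1) → (x ∈ B.1 ↔ y ∈ B.1) → x = y) := by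
    intro hinj
    have := pigeon2 A.1 B.1 hinj
    rw [A.2, B.2] at this
    omega
  push_neg at hP
  obtain ⟨x, y, hxA, hxB, hxy⟩ := hP
  refine not_det_of_swap hk (by omega) hxy _ ?_
  intro v hv
  rcases hcov v hv with rfl | rfl
  exacts [hxA, hxB]

/-! ### generic determining facts -/

lemma iso_ext_off_point {V : Type*} {G : SimpleGraph V} (g h : G ≃g G) (x : V)
    (hagree : ∀ y, y ≠ x → g y = h y) : ∀ y, g y = h y := by
  intro y
  rcases eq_or_ne y x with rfl | hy
  · have hz : h.symm (g y) = y := by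
      by_contra hne
      have h1 := hagree _ hne
      have h2 : h (h.symm (g y)) = g y := h.apply_symm_apply _
      exact hne (g.injective (h1.trans h2))
    calc g y = h (h.symm (g y)) := (h.apply_symm_apply _).symm
    _ = h y := by rw [hz]
  · exact hagree y hy

lemma relIso_ext {V : Type*} {G : SimpleGraph V} {g h : G ≃g G}
    (H : ∀ v, g v = h v) : g = h := by
  cases g; cases h
  simp only [RelIso.mk.injEq]
  exact Equiv.ext H

lemma det_of_fix3 {V : Type*} {G : SimpleGraph V} {A B C : V}
    (hfix : ∀ f : G ≃g G, f A = A → f B = B → f C = C → ∀ v, f v = v) :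
    IsDeterminingSet G ({A, B, C} : Set V) := by
  intro g h hagree
  have hA := hagree A (by simp)
  have hB := hagree B (by simp)
  have hC := hagree C (by simp)
  set φ : G ≃g G := g.trans h.symm with hφ
  have happ : ∀ v, φ v = h.symm (g v) := fun v => rfl
  have key := hfix φ
    (by rw [happ, hA, h.symm_apply_apply])
    (by rw [happ, hB, h.symm_apply_apply])
    (by rw [happ, hC, h.symm_apply_apply])
  apply relIso_ext
  intro v
  have := key v
  rw [happ] at this
  calc g v = h (h.symm (g v)) := (h.apply_symm_apply _).symm
  _ = h v := by rw [this]

lemma detNumber_eq_three_of {V : Type*} {G : SimpleGraph V}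
    (S : Finset V) (hcard : S.card = 3) (hdet : IsDeterminingSet G (S : Set V))
    (hlb : ∀ T : Finset V, IsDeterminingSet G (T : Set V) → 3 ≤ T.card) :
    detNumber G = 3 := by
  refine le_antisymm (Nat.sInf_le ⟨S, hcard, hdet⟩) ?_
  refine le_csInf ⟨3, S, hcard, hdet⟩ ?_
  rintro m ⟨T, rfl, hT⟩
  exact hlb T hT

def P_0 : KV 5 2 := ⟨{0,1}, by decide⟩
def P_1 : KV 5 2 := ⟨{2,3}, by decide⟩
def P_2 : KV 5 2 := ⟨{0,2}, by decide⟩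
def P_3 : KV 5 2 := ⟨{0,4}, by decide⟩
def P_4 : KV 5 2 := ⟨{1,2}, by decide⟩
def P_5 : KV 5 2 := ⟨{0,3}, by decide⟩
def P_6 : KV 5 2 := ⟨{1,3}, by decide⟩
def P_7 : KV 5 2 := ⟨{1,4}, by decide⟩
def P_8 : KV 5 2 := ⟨{2,4}, by decide⟩
def P_9 : KV 5 2 := ⟨{3,4}, by decide⟩

theorem P_fix (f : kneserGraph 5 2 ≃g kneserGraph 5 2)
    (h0 : f P_0 = P_0) (h1 : f P_1 = P_1) (h2 : f P_2 = P_2) :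
    ∀ v, f v = v := by
  have hf2 : ∀ u ∈ ([P_2, P_1, P_0] : List (KV 5 2)), f u = u := by
    intro u hu; fin_cases hu <;> assumption
  have h3 : f P_3 = P_3 := fix_step f [P_2, P_1, P_0] [P_1, P_2] (by decide) hf2 P_3 (by decide)
  have hf3 : ∀ u ∈ ([P_3, P_2, P_1, P_0] : List (KV 5 2)), f u = u := by
    intro u hu; rcases List.mem_cons.mp hu with rfl | hu
    · exact h3
    · exact hf2 u hu
  have h4 : f P_4 = P_4 := fix_step f [P_3, P_2, P_1, P_0] [P_2, P_3] (by decide) hf3 P_4 (by decide)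
  have hf4 : ∀ u ∈ ([P_4, P_3, P_2, P_1, P_0] : List (KV 5 2)), f u = u := by
    intro u hu; rcases List.mem_cons.mp hu with rfl | hu
    · exact h4
    · exact hf3 u hu
  have h5 : f P_5 = P_5 := fix_step f [P_4, P_3, P_2, P_1, P_0] [P_0, P_2] (by decide) hf4 P_5 (by decide)
  have hf5 : ∀ u ∈ ([P_5, P_4, P_3, P_2, P_1, P_0] : List (KV 5 2)), f u = u := by
    intro u hu; rcases List.mem_cons.mp hu with rfl | hu
    · exact h5
    · exact hf4 u hu
  have h6 : f P_6 = P_6 := fix_step f [P_5, P_4, P_3, P_2, P_1, P_0] [P_3] (by decide) hf5 P_6 (by decide)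
  have hf6 : ∀ u ∈ ([P_6, P_5, P_4, P_3, P_2, P_1, P_0] : List (KV 5 2)), f u = u := by
    intro u hu; rcases List.mem_cons.mp hu with rfl | hu
    · exact h6
    · exact hf5 u hu
  have h7 : f P_7 = P_7 := fix_step f [P_6, P_5, P_4, P_3, P_2, P_1, P_0] [P_0] (by decide) hf6 P_7 (by decide)
  have hf7 : ∀ u ∈ ([P_7, P_6, P_5, P_4, P_3, P_2, P_1, P_0] : List (KV 5 2)), f u = u := by
    intro u hu; rcases List.mem_cons.mp hu with rfl | hu
    · exact h7
    · exact hf6 u hu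
  have h8 : f P_8 = P_8 := fix_step f [P_7, P_6, P_5, P_4, P_3, P_2, P_1, P_0] [P_2] (by decide) hf7 P_8 (by decide)
  have hf8 : ∀ u ∈ ([P_8, P_7, P_6, P_5, P_4, P_3, P_2, P_1, P_0] : List (KV 5 2)), f u = u := by
    intro u hu; rcases List.mem_cons.mp hu with rfl | hu
    · exact h8
    · exact hf7 u hu
  have h9 : f P_9 = P_9 := fix_step f [P_8, P_7, P_6, P_5, P_4, P_3, P_2, P_1, P_0] [] (by decide) hf8 P_9 (by decide)
  have hf9 : ∀ u ∈ ([P_9, P_8, P_7, P_6, P_5, P_4, P_3, P_2, P_1, P_0] : List (KV 5 2)), f u = u := by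
    intro u hu; rcases List.mem_cons.mp hu with rfl | hu
    · exact h9
    · exact hf8 u hu
  intro v
  have hv : v ∈ ([P_9, P_8, P_7, P_6, P_5, P_4, P_3, P_2, P_1, P_0] : List (KV 5 2)) := by revert v; decide
  exact hf9 v hv

def Q_0 : KV 7 3 := ⟨{0,3,4}, by decide⟩
def Q_1 : KV 7 3 := ⟨{1,3,5}, by decide⟩
def Q_2 : KV 7 3 := ⟨{2,4,5}, by decide⟩
def Q_3 : KV 7 3 := ⟨{0,1,3}, by decide⟩
def Q_4 : KV 7 3 := ⟨{0,3,6}, by decide⟩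
def Q_5 : KV 7 3 := ⟨{0,1,6}, by decide⟩
def Q_6 : KV 7 3 := ⟨{1,2,4}, by decide⟩
def Q_7 : KV 7 3 := ⟨{0,3,5}, by decide⟩
def Q_8 : KV 7 3 := ⟨{0,5,6}, by decide⟩
def Q_9 : KV 7 3 := ⟨{0,1,5}, by decide⟩
def Q_10 : KV 7 3 := ⟨{0,2,3}, by decide⟩
def Q_11 : KV 7 3 := ⟨{1,2,3}, by decide⟩
def Q_12 : KV 7 3 := ⟨{0,1,2}, by decide⟩
def Q_13 : KV 7 3 := ⟨{0,1,4}, by decide⟩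
def Q_14 : KV 7 3 := ⟨{0,2,5}, by decide⟩
def Q_15 : KV 7 3 := ⟨{0,4,5}, by decide⟩
def Q_16 : KV 7 3 := ⟨{0,4,6}, by decide⟩
def Q_17 : KV 7 3 := ⟨{0,2,4}, by decide⟩
def Q_18 : KV 7 3 := ⟨{0,2,6}, by decide⟩
def Q_19 : KV 7 3 := ⟨{1,2,5}, by decide⟩
def Q_20 : KV 7 3 := ⟨{1,2,6}, by decide⟩
def Q_21 : KV 7 3 := ⟨{1,3,4}, by decide⟩
def Q_22 : KV 7 3 := ⟨{1,3,6}, by decide⟩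
def Q_23 : KV 7 3 := ⟨{1,4,5}, by decide⟩
def Q_24 : KV 7 3 := ⟨{1,4,6}, by decide⟩
def Q_25 : KV 7 3 := ⟨{1,5,6}, by decide⟩
def Q_26 : KV 7 3 := ⟨{2,3,4}, by decide⟩
def Q_27 : KV 7 3 := ⟨{2,3,5}, by decide⟩
def Q_28 : KV 7 3 := ⟨{2,3,6}, by decide⟩
def Q_29 : KV 7 3 := ⟨{2,4,6}, by decide⟩
def Q_30 : KV 7 3 := ⟨{2,5,6}, by decide⟩
def Q_31 : KV 7 3 := ⟨{3,4,5}, by decide⟩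
def Q_32 : KV 7 3 := ⟨{3,4,6}, by decide⟩
def Q_33 : KV 7 3 := ⟨{3,5,6}, by decide⟩
def Q_34 : KV 7 3 := ⟨{4,5,6}, by decide⟩

theorem Q_fix (f : kneserGraph 7 3 ≃g kneserGraph 7 3)
    (h0 : f Q_0 = Q_0) (h1 : f Q_1 = Q_1) (h2 : f Q_2 = Q_2) :
    ∀ v, f v = v := by
  have hf2 : ∀ u ∈ ([Q_2, Q_1, Q_0] : List (KV 7 3)), f u = u := by
    intro u hu; fin_cases hu <;> assumption
  have h3 : f Q_3 = Q_3 := fix_step f [Q_2, Q_1, Q_0] [Q_0, Q_1, Q_2] (by decide) hf2 Q_3 (by decide)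
  have hf3 : ∀ u ∈ ([Q_3, Q_2, Q_1, Q_0] : List (KV 7 3)), f u = u := by
    intro u hu; rcases List.mem_cons.mp hu with rfl | hu
    · exact h3
    · exact hf2 u hu
  have h4 : f Q_4 = Q_4 := fix_step f [Q_3, Q_2, Q_1, Q_0] [Q_0, Q_2] (by decide) hf3 Q_4 (by decide)
  have hf4 : ∀ u ∈ ([Q_4, Q_3, Q_2, Q_1, Q_0] : List (KV 7 3)), f u = u := by
    intro u hu; rcases List.mem_cons.mp hu with rfl | hu
    · exact h4
    · exact hf3 u hu
  have h5 : f Q_5 = Q_5 := fix_step f [Q_4, Q_3, Q_2, Q_1, Q_0] [Q_1, Q_2] (by decide) hf4 Q_5 (by decide)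
  have hf5 : ∀ u ∈ ([Q_5, Q_4, Q_3, Q_2, Q_1, Q_0] : List (KV 7 3)), f u = u := by
    intro u hu; rcases List.mem_cons.mp hu with rfl | hu
    · exact h5
    · exact hf4 u hu
  have h6 : f Q_6 = Q_6 := fix_step f [Q_5, Q_4, Q_3, Q_2, Q_1, Q_0] [Q_1, Q_4] (by decide) hf5 Q_6 (by decide)
  have hf6 : ∀ u ∈ ([Q_6, Q_5, Q_4, Q_3, Q_2, Q_1, Q_0] : List (KV 7 3)), f u = u := by
    intro u hu; rcases List.mem_cons.mp hu with rfl | hu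
    · exact h6
    · exact hf5 u hu
  have h7 : f Q_7 = Q_7 := fix_step f [Q_6, Q_5, Q_4, Q_3, Q_2, Q_1, Q_0] [Q_0, Q_6] (by decide) hf6 Q_7 (by decide)
  have hf7 : ∀ u ∈ ([Q_7, Q_6, Q_5, Q_4, Q_3, Q_2, Q_1, Q_0] : List (KV 7 3)), f u = u := by
    intro u hu; rcases List.mem_cons.mp hu with rfl | hu
    · exact h7
    · exact hf6 u hu
  have h8 : f Q_8 = Q_8 := fix_step f [Q_7, Q_6, Q_5, Q_4, Q_3, Q_2, Q_1, Q_0] [Q_1, Q_6] (by decide) hf7 Q_8 (by decide)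
  have hf8 : ∀ u ∈ ([Q_8, Q_7, Q_6, Q_5, Q_4, Q_3, Q_2, Q_1, Q_0] : List (KV 7 3)), f u = u := by
    intro u hu; rcases List.mem_cons.mp hu with rfl | hu
    · exact h8
    · exact hf7 u hu
  have h9 : f Q_9 = Q_9 := fix_step f [Q_8, Q_7, Q_6, Q_5, Q_4, Q_3, Q_2, Q_1, Q_0] [Q_3, Q_8] (by decide) hf8 Q_9 (by decide)
  have hf9 : ∀ u ∈ ([Q_9, Q_8, Q_7, Q_6, Q_5, Q_4, Q_3, Q_2, Q_1, Q_0] : List (KV 7 3)), f u = u := by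
    intro u hu; rcases List.mem_cons.mp hu with rfl | hu
    · exact h9
    · exact hf8 u hu
  have h10 : f Q_10 = Q_10 := fix_step f [Q_9, Q_8, Q_7, Q_6, Q_5, Q_4, Q_3, Q_2, Q_1, Q_0] [Q_3, Q_7] (by decide) hf9 Q_10 (by decide)
  have hf10 : ∀ u ∈ ([Q_10, Q_9, Q_8, Q_7, Q_6, Q_5, Q_4, Q_3, Q_2, Q_1, Q_0] : List (KV 7 3)), f u = u := by
    intro u hu; rcases List.mem_cons.mp hu with rfl | hu
    · exact h10
    · exact hf9 u hu
  have h11 : f Q_11 = Q_11 := fix_step f [Q_10, Q_9, Q_8, Q_7, Q_6, Q_5, Q_4, Q_3, Q_2, Q_1, Q_0] [Q_0, Q_8] (by decide) hf10 Q_11 (by decide)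
  have hf11 : ∀ u ∈ ([Q_11, Q_10, Q_9, Q_8, Q_7, Q_6, Q_5, Q_4, Q_3, Q_2, Q_1, Q_0] : List (KV 7 3)), f u = u := by
    intro u hu; rcases List.mem_cons.mp hu with rfl | hu
    · exact h11
    · exact hf10 u hu
  have h12 : f Q_12 = Q_12 := fix_step f [Q_11, Q_10, Q_9, Q_8, Q_7, Q_6, Q_5, Q_4, Q_3, Q_2, Q_1, Q_0] [Q_10, Q_3] (by decide) hf11 Q_12 (by decide)
  have hf12 : ∀ u ∈ ([Q_12, Q_11, Q_10, Q_9, Q_8, Q_7, Q_6, Q_5, Q_4, Q_3, Q_2, Q_1, Q_0] : List (KV 7 3)), f u = u := by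
    intro u hu; rcases List.mem_cons.mp hu with rfl | hu
    · exact h12
    · exact hf11 u hu
  have h13 : f Q_13 = Q_13 := fix_step f [Q_12, Q_11, Q_10, Q_9, Q_8, Q_7, Q_6, Q_5, Q_4, Q_3, Q_2, Q_1, Q_0] [Q_1, Q_3] (by decide) hf12 Q_13 (by decide)
  have hf13 : ∀ u ∈ ([Q_13, Q_12, Q_11, Q_10, Q_9, Q_8, Q_7, Q_6, Q_5, Q_4, Q_3, Q_2, Q_1, Q_0] : List (KV 7 3)), f u = u := by
    intro u hu; rcases List.mem_cons.mp hu with rfl | hu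
    · exact h13
    · exact hf12 u hu
  have h14 : f Q_14 = Q_14 := fix_step f [Q_13, Q_12, Q_11, Q_10, Q_9, Q_8, Q_7, Q_6, Q_5, Q_4, Q_3, Q_2, Q_1, Q_0] [Q_12, Q_7] (by decide) hf13 Q_14 (by decide)
  have hf14 : ∀ u ∈ ([Q_14, Q_13, Q_12, Q_11, Q_10, Q_9, Q_8, Q_7, Q_6, Q_5, Q_4, Q_3, Q_2, Q_1, Q_0] : List (KV 7 3)), f u = u := by
    intro u hu; rcases List.mem_cons.mp hu with rfl | hu
    · exact h14
    · exact hf13 u hu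
  have h15 : f Q_15 = Q_15 := fix_step f [Q_14, Q_13, Q_12, Q_11, Q_10, Q_9, Q_8, Q_7, Q_6, Q_5, Q_4, Q_3, Q_2, Q_1, Q_0] [Q_11, Q_7] (by decide) hf14 Q_15 (by decide)
  have hf15 : ∀ u ∈ ([Q_15, Q_14, Q_13, Q_12, Q_11, Q_10, Q_9, Q_8, Q_7, Q_6, Q_5, Q_4, Q_3, Q_2, Q_1, Q_0] : List (KV 7 3)), f u = u := by
    intro u hu; rcases List.mem_cons.mp hu with rfl | hu
    · exact h15
    · exact hf14 u hu
  have h16 : f Q_16 = Q_16 := fix_step f [Q_15, Q_14, Q_13, Q_12, Q_11, Q_10, Q_9, Q_8, Q_7, Q_6, Q_5, Q_4, Q_3, Q_2, Q_1, Q_0] [Q_0, Q_11] (by decide) hf15 Q_16 (by decide)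
  have hf16 : ∀ u ∈ ([Q_16, Q_15, Q_14, Q_13, Q_12, Q_11, Q_10, Q_9, Q_8, Q_7, Q_6, Q_5, Q_4, Q_3, Q_2, Q_1, Q_0] : List (KV 7 3)), f u = u := by
    intro u hu; rcases List.mem_cons.mp hu with rfl | hu
    · exact h16
    · exact hf15 u hu
  have h17 : f Q_17 = Q_17 := fix_step f [Q_16, Q_15, Q_14, Q_13, Q_12, Q_11, Q_10, Q_9, Q_8, Q_7, Q_6, Q_5, Q_4, Q_3, Q_2, Q_1, Q_0] [Q_0, Q_1] (by decide) hf16 Q_17 (by decide)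
  have hf17 : ∀ u ∈ ([Q_17, Q_16, Q_15, Q_14, Q_13, Q_12, Q_11, Q_10, Q_9, Q_8, Q_7, Q_6, Q_5, Q_4, Q_3, Q_2, Q_1, Q_0] : List (KV 7 3)), f u = u := by
    intro u hu; rcases List.mem_cons.mp hu with rfl | hu
    · exact h17
    · exact hf16 u hu
  have h18 : f Q_18 = Q_18 := fix_step f [Q_17, Q_16, Q_15, Q_14, Q_13, Q_12, Q_11, Q_10, Q_9, Q_8, Q_7, Q_6, Q_5, Q_4, Q_3, Q_2, Q_1, Q_0] [Q_1, Q_2] (by decide) hf17 Q_18 (by decide)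
  have hf18 : ∀ u ∈ ([Q_18, Q_17, Q_16, Q_15, Q_14, Q_13, Q_12, Q_11, Q_10, Q_9, Q_8, Q_7, Q_6, Q_5, Q_4, Q_3, Q_2, Q_1, Q_0] : List (KV 7 3)), f u = u := by
    intro u hu; rcases List.mem_cons.mp hu with rfl | hu
    · exact h18
    · exact hf17 u hu
  have h19 : f Q_19 = Q_19 := fix_step f [Q_18, Q_17, Q_16, Q_15, Q_14, Q_13, Q_12, Q_11, Q_10, Q_9, Q_8, Q_7, Q_6, Q_5, Q_4, Q_3, Q_2, Q_1, Q_0] [Q_0, Q_4] (by decide) hf18 Q_19 (by decide)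
  have hf19 : ∀ u ∈ ([Q_19, Q_18, Q_17, Q_16, Q_15, Q_14, Q_13, Q_12, Q_11, Q_10, Q_9, Q_8, Q_7, Q_6, Q_5, Q_4, Q_3, Q_2, Q_1, Q_0] : List (KV 7 3)), f u = u := by
    intro u hu; rcases List.mem_cons.mp hu with rfl | hu
    · exact h19
    · exact hf18 u hu
  have h20 : f Q_20 = Q_20 := fix_step f [Q_19, Q_18, Q_17, Q_16, Q_15, Q_14, Q_13, Q_12, Q_11, Q_10, Q_9, Q_8, Q_7, Q_6, Q_5, Q_4, Q_3, Q_2, Q_1, Q_0] [Q_12] (by decide) hf19 Q_20 (by decide)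
  have hf20 : ∀ u ∈ ([Q_20, Q_19, Q_18, Q_17, Q_16, Q_15, Q_14, Q_13, Q_12, Q_11, Q_10, Q_9, Q_8, Q_7, Q_6, Q_5, Q_4, Q_3, Q_2, Q_1, Q_0] : List (KV 7 3)), f u = u := by
    intro u hu; rcases List.mem_cons.mp hu with rfl | hu
    · exact h20
    · exact hf19 u hu
  have h21 : f Q_21 = Q_21 := fix_step f [Q_20, Q_19, Q_18, Q_17, Q_16, Q_15, Q_14, Q_13, Q_12, Q_11, Q_10, Q_9, Q_8, Q_7, Q_6, Q_5, Q_4, Q_3, Q_2, Q_1, Q_0] [Q_0, Q_3] (by decide) hf20 Q_21 (by decide)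
  have hf21 : ∀ u ∈ ([Q_21, Q_20, Q_19, Q_18, Q_17, Q_16, Q_15, Q_14, Q_13, Q_12, Q_11, Q_10, Q_9, Q_8, Q_7, Q_6, Q_5, Q_4, Q_3, Q_2, Q_1, Q_0] : List (KV 7 3)), f u = u := by
    intro u hu; rcases List.mem_cons.mp hu with rfl | hu
    · exact h21
    · exact hf20 u hu
  have h22 : f Q_22 = Q_22 := fix_step f [Q_21, Q_20, Q_19, Q_18, Q_17, Q_16, Q_15, Q_14, Q_13, Q_12, Q_11, Q_10, Q_9, Q_8, Q_7, Q_6, Q_5, Q_4, Q_3, Q_2, Q_1, Q_0] [Q_2] (by decide) hf21 Q_22 (by decide)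
  have hf22 : ∀ u ∈ ([Q_22, Q_21, Q_20, Q_19, Q_18, Q_17, Q_16, Q_15, Q_14, Q_13, Q_12, Q_11, Q_10, Q_9, Q_8, Q_7, Q_6, Q_5, Q_4, Q_3, Q_2, Q_1, Q_0] : List (KV 7 3)), f u = u := by
    intro u hu; rcases List.mem_cons.mp hu with rfl | hu
    · exact h22
    · exact hf21 u hu
  have h23 : f Q_23 = Q_23 := fix_step f [Q_22, Q_21, Q_20, Q_19, Q_18, Q_17, Q_16, Q_15, Q_14, Q_13, Q_12, Q_11, Q_10, Q_9, Q_8, Q_7, Q_6, Q_5, Q_4, Q_3, Q_2, Q_1, Q_0] [Q_4] (by decide) hf22 Q_23 (by decide)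
  have hf23 : ∀ u ∈ ([Q_23, Q_22, Q_21, Q_20, Q_19, Q_18, Q_17, Q_16, Q_15, Q_14, Q_13, Q_12, Q_11, Q_10, Q_9, Q_8, Q_7, Q_6, Q_5, Q_4, Q_3, Q_2, Q_1, Q_0] : List (KV 7 3)), f u = u := by
    intro u hu; rcases List.mem_cons.mp hu with rfl | hu
    · exact h23
    · exact hf22 u hu
  have h24 : f Q_24 = Q_24 := fix_step f [Q_23, Q_22, Q_21, Q_20, Q_19, Q_18, Q_17, Q_16, Q_15, Q_14, Q_13, Q_12, Q_11, Q_10, Q_9, Q_8, Q_7, Q_6, Q_5, Q_4, Q_3, Q_2, Q_1, Q_0] [Q_13] (by decide) hf23 Q_24 (by decide)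
  have hf24 : ∀ u ∈ ([Q_24, Q_23, Q_22, Q_21, Q_20, Q_19, Q_18, Q_17, Q_16, Q_15, Q_14, Q_13, Q_12, Q_11, Q_10, Q_9, Q_8, Q_7, Q_6, Q_5, Q_4, Q_3, Q_2, Q_1, Q_0] : List (KV 7 3)), f u = u := by
    intro u hu; rcases List.mem_cons.mp hu with rfl | hu
    · exact h24
    · exact hf23 u hu
  have h25 : f Q_25 = Q_25 := fix_step f [Q_24, Q_23, Q_22, Q_21, Q_20, Q_19, Q_18, Q_17, Q_16, Q_15, Q_14, Q_13, Q_12, Q_11, Q_10, Q_9, Q_8, Q_7, Q_6, Q_5, Q_4, Q_3, Q_2, Q_1, Q_0] [Q_5] (by decide) hf24 Q_25 (by decide)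
  have hf25 : ∀ u ∈ ([Q_25, Q_24, Q_23, Q_22, Q_21, Q_20, Q_19, Q_18, Q_17, Q_16, Q_15, Q_14, Q_13, Q_12, Q_11, Q_10, Q_9, Q_8, Q_7, Q_6, Q_5, Q_4, Q_3, Q_2, Q_1, Q_0] : List (KV 7 3)), f u = u := by
    intro u hu; rcases List.mem_cons.mp hu with rfl | hu
    · exact h25
    · exact hf24 u hu
  have h26 : f Q_26 = Q_26 := fix_step f [Q_25, Q_24, Q_23, Q_22, Q_21, Q_20, Q_19, Q_18, Q_17, Q_16, Q_15, Q_14, Q_13, Q_12, Q_11, Q_10, Q_9, Q_8, Q_7, Q_6, Q_5, Q_4, Q_3, Q_2, Q_1, Q_0] [Q_8] (by decide) hf25 Q_26 (by decide)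
  have hf26 : ∀ u ∈ ([Q_26, Q_25, Q_24, Q_23, Q_22, Q_21, Q_20, Q_19, Q_18, Q_17, Q_16, Q_15, Q_14, Q_13, Q_12, Q_11, Q_10, Q_9, Q_8, Q_7, Q_6, Q_5, Q_4, Q_3, Q_2, Q_1, Q_0] : List (KV 7 3)), f u = u := by
    intro u hu; rcases List.mem_cons.mp hu with rfl | hu
    · exact h26
    · exact hf25 u hu
  have h27 : f Q_27 = Q_27 := fix_step f [Q_26, Q_25, Q_24, Q_23, Q_22, Q_21, Q_20, Q_19, Q_18, Q_17, Q_16, Q_15, Q_14, Q_13, Q_12, Q_11, Q_10, Q_9, Q_8, Q_7, Q_6, Q_5, Q_4, Q_3, Q_2, Q_1, Q_0] [Q_16] (by decide) hf26 Q_27 (by decide)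
  have hf27 : ∀ u ∈ ([Q_27, Q_26, Q_25, Q_24, Q_23, Q_22, Q_21, Q_20, Q_19, Q_18, Q_17, Q_16, Q_15, Q_14, Q_13, Q_12, Q_11, Q_10, Q_9, Q_8, Q_7, Q_6, Q_5, Q_4, Q_3, Q_2, Q_1, Q_0] : List (KV 7 3)), f u = u := by
    intro u hu; rcases List.mem_cons.mp hu with rfl | hu
    · exact h27
    · exact hf26 u hu
  have h28 : f Q_28 = Q_28 := fix_step f [Q_27, Q_26, Q_25, Q_24, Q_23, Q_22, Q_21, Q_20, Q_19, Q_18, Q_17, Q_16, Q_15, Q_14, Q_13, Q_12, Q_11, Q_10, Q_9, Q_8, Q_7, Q_6, Q_5, Q_4, Q_3, Q_2, Q_1, Q_0] [Q_10] (by decide) hf27 Q_28 (by decide)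
  have hf28 : ∀ u ∈ ([Q_28, Q_27, Q_26, Q_25, Q_24, Q_23, Q_22, Q_21, Q_20, Q_19, Q_18, Q_17, Q_16, Q_15, Q_14, Q_13, Q_12, Q_11, Q_10, Q_9, Q_8, Q_7, Q_6, Q_5, Q_4, Q_3, Q_2, Q_1, Q_0] : List (KV 7 3)), f u = u := by
    intro u hu; rcases List.mem_cons.mp hu with rfl | hu
    · exact h28
    · exact hf27 u hu
  have h29 : f Q_29 = Q_29 := fix_step f [Q_28, Q_27, Q_26, Q_25, Q_24, Q_23, Q_22, Q_21, Q_20, Q_19, Q_18, Q_17, Q_16, Q_15, Q_14, Q_13, Q_12, Q_11, Q_10, Q_9, Q_8, Q_7, Q_6, Q_5, Q_4, Q_3, Q_2, Q_1, Q_0] [Q_1] (by decide) hf28 Q_29 (by decide)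
  have hf29 : ∀ u ∈ ([Q_29, Q_28, Q_27, Q_26, Q_25, Q_24, Q_23, Q_22, Q_21, Q_20, Q_19, Q_18, Q_17, Q_16, Q_15, Q_14, Q_13, Q_12, Q_11, Q_10, Q_9, Q_8, Q_7, Q_6, Q_5, Q_4, Q_3, Q_2, Q_1, Q_0] : List (KV 7 3)), f u = u := by
    intro u hu; rcases List.mem_cons.mp hu with rfl | hu
    · exact h29
    · exact hf28 u hu
  have h30 : f Q_30 = Q_30 := fix_step f [Q_29, Q_28, Q_27, Q_26, Q_25, Q_24, Q_23, Q_22, Q_21, Q_20, Q_19, Q_18, Q_17, Q_16, Q_15, Q_14, Q_13, Q_12, Q_11, Q_10, Q_9, Q_8, Q_7, Q_6, Q_5, Q_4, Q_3, Q_2, Q_1, Q_0] [Q_0] (by decide) hf29 Q_30 (by decide)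
  have hf30 : ∀ u ∈ ([Q_30, Q_29, Q_28, Q_27, Q_26, Q_25, Q_24, Q_23, Q_22, Q_21, Q_20, Q_19, Q_18, Q_17, Q_16, Q_15, Q_14, Q_13, Q_12, Q_11, Q_10, Q_9, Q_8, Q_7, Q_6, Q_5, Q_4, Q_3, Q_2, Q_1, Q_0] : List (KV 7 3)), f u = u := by
    intro u hu; rcases List.mem_cons.mp hu with rfl | hu
    · exact h30
    · exact hf29 u hu
  have h31 : f Q_31 = Q_31 := fix_step f [Q_30, Q_29, Q_28, Q_27, Q_26, Q_25, Q_24, Q_23, Q_22, Q_21, Q_20, Q_19, Q_18, Q_17, Q_16, Q_15, Q_14, Q_13, Q_12, Q_11, Q_10, Q_9, Q_8, Q_7, Q_6, Q_5, Q_4, Q_3, Q_2, Q_1, Q_0] [Q_5] (by decide) hf30 Q_31 (by decide)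
  have hf31 : ∀ u ∈ ([Q_31, Q_30, Q_29, Q_28, Q_27, Q_26, Q_25, Q_24, Q_23, Q_22, Q_21, Q_20, Q_19, Q_18, Q_17, Q_16, Q_15, Q_14, Q_13, Q_12, Q_11, Q_10, Q_9, Q_8, Q_7, Q_6, Q_5, Q_4, Q_3, Q_2, Q_1, Q_0] : List (KV 7 3)), f u = u := by
    intro u hu; rcases List.mem_cons.mp hu with rfl | hu
    · exact h31
    · exact hf30 u hu
  have h32 : f Q_32 = Q_32 := fix_step f [Q_31, Q_30, Q_29, Q_28, Q_27, Q_26, Q_25, Q_24, Q_23, Q_22, Q_21, Q_20, Q_19, Q_18, Q_17, Q_16, Q_15, Q_14, Q_13, Q_12, Q_11, Q_10, Q_9, Q_8, Q_7, Q_6, Q_5, Q_4, Q_3, Q_2, Q_1, Q_0] [Q_0] (by decide) hf31 Q_32 (by decide)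
  have hf32 : ∀ u ∈ ([Q_32, Q_31, Q_30, Q_29, Q_28, Q_27, Q_26, Q_25, Q_24, Q_23, Q_22, Q_21, Q_20, Q_19, Q_18, Q_17, Q_16, Q_15, Q_14, Q_13, Q_12, Q_11, Q_10, Q_9, Q_8, Q_7, Q_6, Q_5, Q_4, Q_3, Q_2, Q_1, Q_0] : List (KV 7 3)), f u = u := by
    intro u hu; rcases List.mem_cons.mp hu with rfl | hu
    · exact h32
    · exact hf31 u hu
  have h33 : f Q_33 = Q_33 := fix_step f [Q_32, Q_31, Q_30, Q_29, Q_28, Q_27, Q_26, Q_25, Q_24, Q_23, Q_22, Q_21, Q_20, Q_19, Q_18, Q_17, Q_16, Q_15, Q_14, Q_13, Q_12, Q_11, Q_10, Q_9, Q_8, Q_7, Q_6, Q_5, Q_4, Q_3, Q_2, Q_1, Q_0] [Q_1] (by decide) hf32 Q_33 (by decide)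
  have hf33 : ∀ u ∈ ([Q_33, Q_32, Q_31, Q_30, Q_29, Q_28, Q_27, Q_26, Q_25, Q_24, Q_23, Q_22, Q_21, Q_20, Q_19, Q_18, Q_17, Q_16, Q_15, Q_14, Q_13, Q_12, Q_11, Q_10, Q_9, Q_8, Q_7, Q_6, Q_5, Q_4, Q_3, Q_2, Q_1, Q_0] : List (KV 7 3)), f u = u := by
    intro u hu; rcases List.mem_cons.mp hu with rfl | hu
    · exact h33
    · exact hf32 u hu
  have h34 : f Q_34 = Q_34 := fix_step f [Q_33, Q_32, Q_31, Q_30, Q_29, Q_28, Q_27, Q_26, Q_25, Q_24, Q_23, Q_22, Q_21, Q_20, Q_19, Q_18, Q_17, Q_16, Q_15, Q_14, Q_13, Q_12, Q_11, Q_10, Q_9, Q_8, Q_7, Q_6, Q_5, Q_4, Q_3, Q_2, Q_1, Q_0] [] (by decide) hf33 Q_34 (by decide)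
  have hf34 : ∀ u ∈ ([Q_34, Q_33, Q_32, Q_31, Q_30, Q_29, Q_28, Q_27, Q_26, Q_25, Q_24, Q_23, Q_22, Q_21, Q_20, Q_19, Q_18, Q_17, Q_16, Q_15, Q_14, Q_13, Q_12, Q_11, Q_10, Q_9, Q_8, Q_7, Q_6, Q_5, Q_4, Q_3, Q_2, Q_1, Q_0] : List (KV 7 3)), f u = u := by
    intro u hu; rcases List.mem_cons.mp hu with rfl | hu
    · exact h34
    · exact hf33 u hu
  intro v
  have hv : v ∈ ([Q_34, Q_33, Q_32, Q_31, Q_30, Q_29, Q_28, Q_27, Q_26, Q_25, Q_24, Q_23, Q_22, Q_21, Q_20, Q_19, Q_18, Q_17, Q_16, Q_15, Q_14, Q_13, Q_12, Q_11, Q_10, Q_9, Q_8, Q_7, Q_6, Q_5, Q_4, Q_3, Q_2, Q_1, Q_0] : List (KV 7 3)) := by revert v; decide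
  exact hf34 v hv

/-! ### the four small graphs -/

def x0 : KV 4 1 := ⟨{0}, by decide⟩
def x1 : KV 4 1 := ⟨{1}, by decide⟩
def x2 : KV 4 1 := ⟨{2}, by decide⟩
def x3 : KV 4 1 := ⟨{3}, by decide⟩

lemma K4_fix (f : kneserGraph 4 1 ≃g kneserGraph 4 1)
    (h0 : f x0 = x0) (h1 : f x1 = x1) (h2 : f x2 = x2) : ∀ v, f v = v := by
  have hall : ∀ y : KV 4 1, y = x0 ∨ y = x1 ∨ y = x2 ∨ y = x3 := by decide
  exact iso_ext_off_point f (RelIso.refl _) x3 (fun y hy => by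
    rcases hall y with rfl | rfl | rfl | rfl
    exacts [h0, h1, h2, absurd rfl hy])

lemma detK4 : detNumber (kneserGraph 4 1) = 3 := by
  refine detNumber_eq_three_of {x0, x1, x2} (by decide) ?_ ?_
  · have := det_of_fix3 (A := x0) (B := x1) (C := x2) K4_fix
    simpa using this
  · intro T hT
    by_contra hc
    exact nodet2 (by omega) (by omega) (by omega) T (by omega) hT

lemma detP_final : detNumber (kneserGraph 5 2) = 3 := by
  refine detNumber_eq_three_of {P_0, P_1, P_2} (by decide) ?_ ?_
  · have := det_of_fix3 (A := P_0) (B := P_1) (C := P_2) P_fix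
    simpa using this
  · intro T hT
    by_contra hc
    exact nodet2 (by omega) (by omega) (by omega) T (by omega) hT

lemma detQ_final : detNumber (kneserGraph 7 3) = 3 := by
  refine detNumber_eq_three_of {Q_0, Q_1, Q_2} (by decide) ?_ ?_
  · have := det_of_fix3 (A := Q_0) (B := Q_1) (C := Q_2) Q_fix
    simpa using this
  · intro T hT
    by_contra hc
    exact nodet2 (by omega) (by omega) (by omega) T (by omega) hT

def t0 : KV 3 1 := ⟨{0}, by decide⟩
def t1 : KV 3 1 := ⟨{1}, by decide⟩
def t2 : KV 3 1 := ⟨{2}, by decide⟩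

lemma detK31_le : detNumber (kneserGraph 3 1) ≤ 2 := by
  have hall : ∀ y : KV 3 1, y = t0 ∨ y = t1 ∨ y = t2 := by decide
  have hdet : IsDeterminingSet (kneserGraph 3 1) (({t0, t1} : Finset (KV 3 1)) : Set (KV 3 1)) := by
    intro g h hagree
    have h0 : g t0 = h t0 := hagree t0 (by simp)
    have h1 : g t1 = h t1 := hagree t1 (by simp)
    refine relIso_ext (iso_ext_off_point g h t2 (fun y hy => ?_))
    rcases hall y with rfl | rfl | rfl
    exacts [h0, h1, absurd rfl hy]
  exact Nat.sInf_le ⟨{t0, t1}, by decide, hdet⟩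

lemma detk0 (n : ℕ) : detNumber (kneserGraph n 0) = 0 := by
  have hsub : ∀ a b : KV n 0, a = b := fun a b =>
    Subtype.ext (by rw [Finset.card_eq_zero.mp a.2, Finset.card_eq_zero.mp b.2])
  refine Nat.sInf_eq_zero.mpr (Or.inl ⟨∅, Finset.card_empty, ?_⟩)
  intro g h _
  exact relIso_ext (fun v => hsub _ _)

/-! ### main theorem -/

theorem stmt_16 (n k : ℕ) (hn : 2 * k + 1 ≤ n) :
    detNumber (kneserGraph n k) = 3 ↔
      (n = 4 ∧ k = 1) ∨ (n = 5 ∧ k = 2) ∨ (n = 7 ∧ k = 3) := by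
  constructor
  · intro h3
    by_cases hk0 : k = 0
    · subst hk0; rw [detk0] at h3; omega
    have hk : 1 ≤ k := by omega
    by_cases c1 : n = 4 ∧ k = 1
    · exact Or.inl c1
    by_cases c2 : n = 5 ∧ k = 2
    · exact Or.inr (Or.inl c2)
    by_cases c3 : n = 7 ∧ k = 3
    · exact Or.inr (Or.inr c3)
    exfalso
    by_cases c0 : n = 3 ∧ k = 1
    · obtain ⟨rfl, rfl⟩ := c0
      have := detK31_le
      omega
    · have huniv : IsDeterminingSet (kneserGraph n k)
          ((Finset.univ : Finset (KV n k)) : Set (KV n k)) :=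
        fun g h hag => relIso_ext (fun v => hag v (by simp))
      have hne : {m | ∃ S : Finset (KV n k), S.card = m ∧
          IsDeterminingSet (kneserGraph n k) (S : Set (KV n k))}.Nonempty :=
        ⟨_, Finset.univ, rfl, huniv⟩
      have hmem := Nat.sInf_mem hne
      have h3' : sInf {m | ∃ S : Finset (KV n k), S.card = m ∧
          IsDeterminingSet (kneserGraph n k) (S : Set (KV n k))} = 3 := h3
      rw [h3'] at hmem
      obtain ⟨S, hcard, hdet⟩ := hmem
      exact nodet3 hk hn (by omega) S (le_of_eq hcard) hdet
  · rintro (⟨rfl, rfl⟩ | ⟨rfl, rfl⟩ | ⟨rfl, rfl⟩)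
    exacts [detK4, detP_final, detQ_final]
end

section
/- For a Kneser graph K_{n+1:k} with n+1 ≥ 2k+1, the determining number equals n+1−k if and only if k = 1, or (n+1, k) = (5, 2), or (n+1, k) = (6, 2). -/
open Finset


-- If C doesn't contain A∩B, then C ⊆ A ∪ B  (all sets size r+1, pairwise intersections size r)
lemma pair_sub_union {m r : ℕ} {A B C : Finset (Fin m)}
    (hC : C.card = r+1)
    (hAB : (A ∩ B).card = r) (hCA : (C ∩ A).card = r) (hCB : (C ∩ B).card = r)
    (hno : ¬ A ∩ B ⊆ C) : C ⊆ A ∪ B := by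
  have h0 : C ∩ A ∩ (C ∩ B) = C ∩ (A ∩ B) := by
    ext x; simp only [mem_inter]; tauto
  have h1 : C ∩ (A ∩ B) ⊂ A ∩ B := by
    refine ⟨inter_subset_right, fun hsub => hno fun x hx => ?_⟩
    exact (mem_inter.mp (hsub hx)).1
  have h2 : (C ∩ (A ∩ B)).card < r := hAB ▸ card_lt_card h1
  have h3 : C ∩ A ∪ C ∩ B = C ∩ (A ∪ B) := (inter_union_distrib_left C A B).symm
  have h4 := card_union_add_card_inter (C ∩ A) (C ∩ B)
  rw [h0, h3, hCA, hCB] at h4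
  have h5 : C.card ≤ (C ∩ (A ∪ B)).card := by omega
  have h6 : C ∩ (A ∪ B) = C := eq_of_subset_of_card_le inter_subset_left h5
  rw [← h6]; exact inter_subset_right

lemma clique_core {m r : ℕ} (K : Finset (Finset (Fin m)))
    (hcard : ∀ A ∈ K, A.card = r + 1)
    (hpair : ∀ A ∈ K, ∀ B ∈ K, A ≠ B → (A ∩ B).card = r)
    (hsize : r + 3 ≤ K.card) :
    ∃ Z : Finset (Fin m), Z.card = r ∧ ∀ A ∈ K, Z ⊆ A := by
  obtain ⟨A, hA, B, hB, hAB⟩ := one_lt_card.mp (by omega : 1 < K.card)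
  refine ⟨A ∩ B, hpair A hA B hB hAB, ?_⟩
  by_contra hcon
  push_neg at hcon
  obtain ⟨C, hC, hCsub⟩ := hcon
  have hCA : C ≠ A := fun h => hCsub (h ▸ inter_subset_left)
  have hCB : C ≠ B := fun h => hCsub (h ▸ inter_subset_right)
  have hCU : C ⊆ A ∪ B :=
    pair_sub_union (hcard C hC) (hpair A hA B hB hAB)
      (hpair C hC A hA hCA) (hpair C hC B hB hCB) hCsub
  -- every D ∈ K is ⊆ A ∪ B
  have hall : ∀ D ∈ K, D ⊆ A ∪ B := by
    intro D hD
    by_cases hDsub : A ∩ B ⊆ D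
    · -- D = (A∩B) ∪ {x}
      have hcard1 : (D \ (A ∩ B)).card = 1 := by
        rw [card_sdiff_of_subset hDsub, hcard D hD, hpair A hA B hB hAB]; omega
      obtain ⟨x, hx⟩ := card_eq_one.mp hcard1
      have hDeq : D = insert x (A ∩ B) := by
        have h1 : D = D \ (A ∩ B) ∪ (A ∩ B) := (sdiff_union_of_subset hDsub).symm
        rw [h1, hx]; ext y; simp [or_comm]
      by_cases hxU : x ∈ A ∪ B
      · rw [hDeq]; intro y hy
        rcases mem_insert.mp hy with h | h
        · exact h ▸ hxU
        · exact mem_union_left _ (mem_inter.mp h).1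
      · exfalso
        have hDC : D ≠ C := fun h => hCsub (h ▸ hDsub)
        have hpDC := hpair D hD C hC hDC
        have hsub2 : D ∩ C ⊆ C ∩ (A ∩ B) := by
          intro y hy
          rcases mem_inter.mp hy with ⟨hyD, hyC⟩
          rw [hDeq] at hyD
          rcases mem_insert.mp hyD with h | h
          · exact absurd (hCU (h ▸ hyC)) (h ▸ hxU)
          · exact mem_inter.mpr ⟨hyC, h⟩
        have h1 : C ∩ (A ∩ B) ⊂ A ∩ B :=
          ⟨inter_subset_right, fun hsub => hCsub fun y hy => (mem_inter.mp (hsub hy)).1⟩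
        have h2 := card_lt_card h1
        have h3 := card_le_card hsub2
        rw [hpair A hA B hB hAB] at h2
        omega
    · exact pair_sub_union (hcard D hD) (hpair A hA B hB hAB)
        (hpair D hD A hA (fun h => hDsub (h ▸ inter_subset_left)))
        (hpair D hD B hB (fun h => hDsub (h ▸ inter_subset_right))) hDsub
  have hKsub : K ⊆ (A ∪ B).powersetCard (r+1) := by
    intro D hD; exact mem_powersetCard.mpr ⟨hall D hD, hcard D hD⟩
  have hU : (A ∪ B).card = r + 2 := by
    have := card_union_add_card_inter A B
    rw [hpair A hA B hB hAB, hcard A hA, hcard B hB] at this; omega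
  have h1 := card_le_card hKsub
  rw [card_powersetCard, hU, Nat.choose_succ_self_right] at h1
  omega

def JPres {m r : ℕ} (f : {A : Finset (Fin m) // A.card = r} ≃ {A : Finset (Fin m) // A.card = r}) : Prop :=
  ∀ A B, (((f A).1 ∩ (f B).1).card + 1 = r ↔ (A.1 ∩ B.1).card + 1 = r)

lemma JPres.symm {m r : ℕ} {f : {A : Finset (Fin m) // A.card = r} ≃ {A : Finset (Fin m) // A.card = r}}
    (hf : JPres f) : JPres f.symm := by
  intro A B
  have := hf (f.symm A) (f.symm B)
  simpa using this.symm

-- intersection of all (t+1)-supersets of D is D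
lemma subset_of_all_supersets {m t : ℕ} (hm : t + 2 ≤ m) {D W : Finset (Fin m)} (hD : D.card = t)
    (h : ∀ A : {A : Finset (Fin m) // A.card = t+1}, D ⊆ A.1 → W ⊆ A.1) : W ⊆ D := by
  intro x hx
  by_contra hxD
  have hc : (insert x D).card = t + 1 := by rw [card_insert_of_notMem hxD, hD]
  have hcc : ((insert x D)ᶜ : Finset (Fin m)).Nonempty := by
    rw [← card_pos, card_compl, Fintype.card_fin, hc]; omega
  obtain ⟨y, hy⟩ := hcc
  rw [mem_compl] at hy
  have hyD : y ∉ D := fun h => hy (mem_insert_of_mem h)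
  have hyx : y ≠ x := fun h => hy (h ▸ mem_insert_self x D)
  have hcy : (insert y D).card = t + 1 := by rw [card_insert_of_notMem hyD, hD]
  have := h ⟨insert y D, hcy⟩ (by simp [subset_insert]) hx
  rcases mem_insert.mp this with h' | h'
  · exact hyx h'.symm
  · exact hxD h'

lemma core_exists {m t : ℕ} (hm : 2*t + 3 ≤ m)
    (f : {A : Finset (Fin m) // A.card = t+1} ≃ {A : Finset (Fin m) // A.card = t+1})
    (hf : JPres f) (D : Finset (Fin m)) (hD : D.card = t) :
    ∃ Z : Finset (Fin m), Z.card = t ∧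
      ∀ A : {A : Finset (Fin m) // A.card = t+1}, D ⊆ A.1 → Z ⊆ (f A).1 := by
  classical
  set K : Finset (Finset (Fin m)) :=
    ((univ : Finset {A : Finset (Fin m) // A.card = t+1}).filter (fun A => D ⊆ A.1)).image
      (fun A => (f A).1) with hK
  have hcard : ∀ A ∈ K, A.card = t + 1 := by
    intro A hA
    obtain ⟨B, _, hB2⟩ := mem_image.mp hA
    exact hB2 ▸ (f B).2
  have hinterD : ∀ A B : {A : Finset (Fin m) // A.card = t+1},
      D ⊆ A.1 → D ⊆ B.1 → A ≠ B → (A.1 ∩ B.1).card = t := by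
    intro A B hAD hBD hne
    have h1 : D ⊆ A.1 ∩ B.1 := subset_inter hAD hBD
    have h2 : t ≤ (A.1 ∩ B.1).card := by
      have := card_le_card h1; rwa [hD] at this
    have h3 : (A.1 ∩ B.1).card ≤ t + 1 := by
      have := card_le_card (inter_subset_left : A.1 ∩ B.1 ⊆ A.1); rwa [A.2] at this
    rcases Nat.eq_or_lt_of_le h3 with h | h
    · exfalso
      have h4 : A.1 ∩ B.1 = A.1 := eq_of_subset_of_card_le inter_subset_left (by omega)
      have h5 : A.1 ⊆ B.1 := h4 ▸ inter_subset_right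
      have h6 : A.1 = B.1 := eq_of_subset_of_card_le h5 (by rw [A.2, B.2])
      exact hne (Subtype.ext h6)
    · omega
  have hpair : ∀ A ∈ K, ∀ B ∈ K, A ≠ B → (A ∩ B).card = t := by
    intro A hA B hB hne
    obtain ⟨A', hA'1, hA'2⟩ := mem_image.mp hA
    obtain ⟨B', hB'1, hB'2⟩ := mem_image.mp hB
    have hA'D : D ⊆ A'.1 := (mem_filter.mp hA'1).2
    have hB'D : D ⊆ B'.1 := (mem_filter.mp hB'1).2
    have hne' : A' ≠ B' := fun h => hne (by rw [← hA'2, ← hB'2, h])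
    have := (hf A' B').mpr (by rw [hinterD A' B' hA'D hB'D hne'])
    rw [hA'2, hB'2] at this
    omega
  have hsize : t + 3 ≤ K.card := by
    -- inject Dᶜ into K
    have hDne : (Dᶜ : Finset (Fin m)).Nonempty := by
      rw [← card_pos, card_compl, Fintype.card_fin, hD]; omega
    obtain ⟨x₀, hx₀⟩ := hDne
    rw [mem_compl] at hx₀
    have key : ∀ x : Fin m, (insert (if x ∈ D then x₀ else x) D).card = t + 1 := by
      intro x
      split
      · rw [card_insert_of_notMem hx₀, hD]
      · next h => rw [card_insert_of_notMem h, hD]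
    have h1 : (Dᶜ : Finset (Fin m)).card ≤ K.card := by
      apply card_le_card_of_injOn
        (fun x => (f ⟨insert (if x ∈ D then x₀ else x) D, key x⟩).1)
      · intro x hx
        exact mem_image.mpr ⟨_, mem_filter.mpr ⟨mem_univ _, subset_insert _ _⟩, rfl⟩
      · intro x hx y hy hxy
        simp only [Finset.mem_coe, mem_compl] at hx hy
        have h3 : insert (if x ∈ D then x₀ else x) D = insert (if y ∈ D then x₀ else y) D :=
          congrArg Subtype.val (f.injective (Subtype.ext hxy))
        rw [if_neg hx, if_neg hy] at h3
        have : x ∈ insert y D := h3 ▸ mem_insert_self x D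
        rcases mem_insert.mp this with h | h
        · exact h
        · exact absurd h hx
    rw [card_compl, Fintype.card_fin, hD] at h1
    omega
  obtain ⟨Z, hZ1, hZ2⟩ := clique_core K hcard hpair hsize
  refine ⟨Z, hZ1, fun A hA => hZ2 _ (mem_image.mpr ⟨A, mem_filter.mpr ⟨mem_univ _, hA⟩, rfl⟩)⟩

-- forward preservation of the relation by the induced core map
section step
variable {m t : ℕ}

noncomputable def coreMap (hm : 2*t + 3 ≤ m)
    (f : {A : Finset (Fin m) // A.card = t+1} ≃ {A : Finset (Fin m) // A.card = t+1})
    (hf : JPres f) (D : {A : Finset (Fin m) // A.card = t}) : {A : Finset (Fin m) // A.card = t} :=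
  ⟨(core_exists hm f hf D.1 D.2).choose, (core_exists hm f hf D.1 D.2).choose_spec.1⟩

lemma coreMap_spec (hm : 2*t + 3 ≤ m)
    (f : {A : Finset (Fin m) // A.card = t+1} ≃ {A : Finset (Fin m) // A.card = t+1})
    (hf : JPres f) (D : {A : Finset (Fin m) // A.card = t})
    (A : {A : Finset (Fin m) // A.card = t+1}) (hDA : D.1 ⊆ A.1) :
    (coreMap hm f hf D).1 ⊆ (f A).1 :=
  (core_exists hm f hf D.1 D.2).choose_spec.2 A hDA

lemma coreMap_leftInv (hm : 2*t + 3 ≤ m)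
    (f : {A : Finset (Fin m) // A.card = t+1} ≃ {A : Finset (Fin m) // A.card = t+1})
    (hf : JPres f) (D : {A : Finset (Fin m) // A.card = t}) :
    coreMap hm f.symm hf.symm (coreMap hm f hf D) = D := by
  have hsub : (coreMap hm f.symm hf.symm (coreMap hm f hf D)).1 ⊆ D.1 := by
    apply subset_of_all_supersets (by omega) D.2
    intro A hDA
    have h1 := coreMap_spec hm f hf D A hDA
    have h2 := coreMap_spec hm f.symm hf.symm (coreMap hm f hf D) (f A) h1
    rwa [Equiv.symm_apply_apply] at h2
  exact Subtype.ext (eq_of_subset_of_card_le hsub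
    (by rw [D.2, (coreMap hm f.symm hf.symm (coreMap hm f hf D)).2]))

lemma coreMap_pres (ht : 1 ≤ t) (hm : 2*t + 3 ≤ m)
    (f : {A : Finset (Fin m) // A.card = t+1} ≃ {A : Finset (Fin m) // A.card = t+1})
    (hf : JPres f) (D E : {A : Finset (Fin m) // A.card = t})
    (h : (D.1 ∩ E.1).card + 1 = t) :
    ((coreMap hm f hf D).1 ∩ (coreMap hm f hf E).1).card + 1 = t := by
  have hDE : D ≠ E := by
    intro hEq
    rw [hEq, inter_self, E.2] at h; omega
  have hU : (D.1 ∪ E.1).card = t + 1 := by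
    have := card_union_add_card_inter D.1 E.1
    rw [D.2, E.2] at this; omega
  set A : {A : Finset (Fin m) // A.card = t+1} := ⟨D.1 ∪ E.1, hU⟩ with hA
  have h1 : (coreMap hm f hf D).1 ⊆ (f A).1 := coreMap_spec hm f hf D A subset_union_left
  have h2 : (coreMap hm f hf E).1 ⊆ (f A).1 := coreMap_spec hm f hf E A subset_union_right
  have h3 : (coreMap hm f hf D).1 ∪ (coreMap hm f hf E).1 ⊆ (f A).1 := union_subset h1 h2
  have h4 : ((coreMap hm f hf D).1 ∪ (coreMap hm f hf E).1).card ≤ t + 1 := by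
    have := card_le_card h3; rwa [(f A).2] at this
  have h5 := card_union_add_card_inter (coreMap hm f hf D).1 (coreMap hm f hf E).1
  rw [(coreMap hm f hf D).2, (coreMap hm f hf E).2] at h5
  -- cores distinct
  have hne : coreMap hm f hf D ≠ coreMap hm f hf E := by
    intro hEq
    apply hDE
    rw [← coreMap_leftInv hm f hf D, ← coreMap_leftInv hm f hf E, hEq]
  have h6 : ((coreMap hm f hf D).1 ∩ (coreMap hm f hf E).1).card < t := by
    rcases Nat.lt_or_ge ((coreMap hm f hf D).1 ∩ (coreMap hm f hf E).1).card t with h | h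
    · exact h
    · exfalso
      have hsub : (coreMap hm f hf D).1 ⊆ (coreMap hm f hf E).1 := by
        have heq : (coreMap hm f hf D).1 ∩ (coreMap hm f hf E).1 = (coreMap hm f hf D).1 :=
          eq_of_subset_of_card_le inter_subset_left (by rw [(coreMap hm f hf D).2]; omega)
        rw [← heq]; exact inter_subset_right
      exact hne (Subtype.ext (eq_of_subset_of_card_le hsub
        (by rw [(coreMap hm f hf D).2, (coreMap hm f hf E).2])))
  omega

end step

theorem johnson_classify (m : ℕ) : ∀ (r : ℕ), 1 ≤ r → 2*r + 1 ≤ m →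
    ∀ (f : {A : Finset (Fin m) // A.card = r} ≃ {A : Finset (Fin m) // A.card = r}),
    JPres f → ∃ σ : Equiv.Perm (Fin m), ∀ A, (f A).1 = A.1.image σ := by
  intro r
  induction r with
  | zero => omega
  | succ t IH =>
    intro _ hm f hf
    rcases Nat.eq_or_lt_of_le (Nat.one_le_iff_ne_zero.mpr (Nat.succ_ne_zero t) : 1 ≤ t + 1) with hbase | hstep
    · -- base case t = 0, r = 1
      have ht0 : t = 0 := by omega
      subst ht0
      have hsing : ∀ A : {A : Finset (Fin m) // A.card = 1}, ∃ p : Fin m, A.1 = {p} :=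
        fun A => card_eq_one.mp A.2
      -- construct equiv Fin m ≃ subtype
      let e : Fin m ≃ {A : Finset (Fin m) // A.card = 1} :=
        Equiv.ofBijective (fun p => ⟨{p}, card_singleton p⟩)
          ⟨fun a b h => by
            have : ({a} : Finset (Fin m)) = {b} := congrArg Subtype.val h
            simpa using this,
           fun A => by
            obtain ⟨p, hp⟩ := hsing A
            exact ⟨p, Subtype.ext hp.symm⟩⟩
      refine ⟨e.trans (f.trans e.symm), fun A => ?_⟩
      obtain ⟨p, hp⟩ := hsing A
      have hA : A = e p := Subtype.ext hp
      have h1 : e ((e.trans (f.trans e.symm)) p) = f (e p) := by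
        simp [Equiv.trans_apply]
      calc (f A).1 = (f (e p)).1 := by rw [hA]
        _ = (e ((e.trans (f.trans e.symm)) p)).1 := by rw [h1]
        _ = {(e.trans (f.trans e.symm)) p} := rfl
        _ = A.1.image (e.trans (f.trans e.symm)) := by rw [hp, image_singleton]
    · -- step: t ≥ 1
      have ht : 1 ≤ t := by omega
      have hm' : 2*t + 3 ≤ m := by omega
      let F : {A : Finset (Fin m) // A.card = t} ≃ {A : Finset (Fin m) // A.card = t} :=
        { toFun := coreMap hm' f hf
          invFun := coreMap hm' f.symm hf.symm
          left_inv := coreMap_leftInv hm' f hf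
          right_inv := fun D => coreMap_leftInv hm' f.symm hf.symm D }
      have hFpres : JPres F := by
        intro D E
        constructor
        · intro h
          have := coreMap_pres ht hm' f.symm hf.symm (F D) (F E) h
          have hl : F.symm (F D) = D := F.left_inv D
          have hl2 : F.symm (F E) = E := F.left_inv E
          -- F.symm is coreMap of f.symm
          have : ((F.symm (F D)).1 ∩ (F.symm (F E)).1).card + 1 = t := this
          rwa [hl, hl2] at this
        · exact coreMap_pres ht hm' f hf D E
      obtain ⟨σ, hσ⟩ := IH ht (by omega) F hFpres
      refine ⟨σ, fun A => ?_⟩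
      have himg : A.1.image σ ⊆ (f A).1 := by
        intro z hz
        obtain ⟨x, hxA, hxz⟩ := mem_image.mp hz
        -- find y ∈ A, y ≠ x
        have h2 : 1 < A.1.card := by rw [A.2]; omega
        obtain ⟨a, ha, b, hb, hab⟩ := one_lt_card.mp h2
        have hy : ∃ y ∈ A.1, y ≠ x := by
          rcases eq_or_ne a x with h | h
          · exact ⟨b, hb, fun hbx => hab (h ▸ hbx ▸ rfl)⟩
          · exact ⟨a, ha, h⟩
        obtain ⟨y, hyA, hyx⟩ := hy
        set D : {A : Finset (Fin m) // A.card = t} :=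
          ⟨A.1.erase y, by rw [card_erase_of_mem hyA, A.2]; omega⟩ with hD
        have hspec := coreMap_spec hm' f hf D A (erase_subset _ _)
        have hFD : (F D).1 = D.1.image σ := hσ D
        have : σ x ∈ (F D).1 := by
          rw [hFD]
          exact mem_image_of_mem σ (mem_erase.mpr ⟨Ne.symm hyx, hxA⟩)
        exact hxz ▸ hspec this
      have hcard : ((f A).1).card ≤ (A.1.image σ).card := by
        rw [card_image_of_injective _ σ.injective, A.2, (f A).2]
      exact (eq_of_subset_of_card_le himg hcard).symm


open scoped Classical in
noncomputable def cn (m k : ℕ) (A B : {s : Finset (Fin m) // s.card = k}) : ℕ :=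
  ((univ : Finset {s : Finset (Fin m) // s.card = k}).filter
    (fun C => (kneserGraph m k).Adj A C ∧ (kneserGraph m k).Adj B C)).card

lemma choose_strict {n k : ℕ} (hk : 1 ≤ k) (h : k ≤ n + 1) : n.choose k < (n+1).choose k := by
  obtain ⟨k', rfl⟩ : ∃ k', k = k' + 1 := ⟨k - 1, by omega⟩
  rw [Nat.choose_succ_succ n k']
  have h2 : 0 < n.choose k' := Nat.choose_pos (by omega)
  have h3 : n.choose k'.succ = n.choose (k'+1) := rfl
  omega

lemma cn_eq {m k : ℕ} (hk : 1 ≤ k) (A B : {s : Finset (Fin m) // s.card = k}) :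
    cn m k A B = (((A.1 ∪ B.1)ᶜ : Finset (Fin m)).card).choose k := by
  classical
  rw [← card_powersetCard k ((A.1 ∪ B.1)ᶜ : Finset (Fin m))]
  unfold cn
  apply card_bij (fun C _ => C.1)
  · intro C hC
    simp only [mem_filter, mem_univ, true_and] at hC
    obtain ⟨⟨hd1, _⟩, ⟨hd2, _⟩⟩ : (Disjoint A.1 C.1 ∧ A ≠ C) ∧ (Disjoint B.1 C.1 ∧ B ≠ C) := hC
    refine mem_powersetCard.mpr ⟨?_, C.2⟩
    intro x hx
    rw [mem_compl, mem_union]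
    push_neg
    exact ⟨fun hxa => (Finset.disjoint_left.mp hd1) hxa hx,
           fun hxb => (Finset.disjoint_left.mp hd2) hxb hx⟩
  · intro C _ C' _ h
    exact Subtype.ext h
  · intro s hs
    obtain ⟨hsub, hcard⟩ := mem_powersetCard.mp hs
    have hd : ∀ T : Finset (Fin m), T ⊆ A.1 ∪ B.1 → Disjoint T s := by
      intro T hT
      rw [Finset.disjoint_left]
      intro x hxT hxs
      have := hsub hxs
      rw [mem_compl] at this
      exact this (hT hxT)
    have hdA : Disjoint A.1 s := hd A.1 subset_union_left
    have hdB : Disjoint B.1 s := hd B.1 subset_union_right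
    have hne : ∀ X : {s : Finset (Fin m) // s.card = k}, Disjoint X.1 s → X ≠ ⟨s, hcard⟩ := by
      intro X hX hXe
      have : X.1 = s := congrArg Subtype.val hXe
      rw [this] at hX
      have : s = ∅ := by simpa [disjoint_self] using hX
      rw [this] at hcard
      simp at hcard
      omega
    refine ⟨⟨s, hcard⟩, ?_, rfl⟩
    simp only [mem_filter, mem_univ, true_and]
    exact (⟨⟨hdA, hne A hdA⟩, ⟨hdB, hne B hdB⟩⟩ : (Disjoint A.1 s ∧ A ≠ ⟨s, hcard⟩) ∧ (Disjoint B.1 s ∧ B ≠ ⟨s, hcard⟩))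

lemma cn_iso {m k : ℕ} (g : kneserGraph m k ≃g kneserGraph m k)
    (A B : {s : Finset (Fin m) // s.card = k}) : cn m k (g A) (g B) = cn m k A B := by
  classical
  unfold cn
  symm
  apply card_bij (fun C _ => g C)
  · intro C hC
    simp only [mem_filter, mem_univ, true_and] at hC ⊢
    exact ⟨g.map_rel_iff.mpr hC.1, g.map_rel_iff.mpr hC.2⟩
  · intro C _ C' _ h
    exact g.toEquiv.injective h
  · intro C hC
    simp only [mem_filter, mem_univ, true_and] at hC
    refine ⟨g.symm C, ?_, by simp⟩
    simp only [mem_filter, mem_univ, true_and]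
    have h1 := g.symm.map_rel_iff.mpr hC.1
    have h2 := g.symm.map_rel_iff.mpr hC.2
    simp only [RelIso.symm_apply_apply] at h1 h2
    exact ⟨h1, h2⟩

lemma iso_inter_card {m k : ℕ} (hm : 2*k + 1 ≤ m) (hk : 1 ≤ k)
    (g : kneserGraph m k ≃g kneserGraph m k)
    (A B : {s : Finset (Fin m) // s.card = k})
    (h : (A.1 ∩ B.1).card + 1 = k) : (((g A).1 ∩ (g B).1).card) + 1 = k := by
  classical
  have hne : A ≠ B := by
    intro hEq; rw [hEq, inter_self, B.2] at h; omega
  have hUn : (A.1 ∪ B.1).card = k + 1 := by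
    have := card_union_add_card_inter A.1 B.1
    rw [A.2, B.2] at this; omega
  have hu : ((A.1 ∪ B.1)ᶜ : Finset (Fin m)).card = m - (k+1) := by
    rw [card_compl, Fintype.card_fin, hUn]
  have hgne : g A ≠ g B := fun hEq => hne (g.injective hEq)
  set t := ((g A).1 ∩ (g B).1).card with ht
  have htle : t ≤ k := by
    have := card_le_card (inter_subset_left : (g A).1 ∩ (g B).1 ⊆ (g A).1)
    rwa [(g A).2] at this
  have htk : t < k := by
    rcases Nat.lt_or_ge t k with h' | h'
    · exact h'
    · exfalso
      have heq : (g A).1 ∩ (g B).1 = (g A).1 :=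
        eq_of_subset_of_card_le inter_subset_left (by rw [(g A).2]; omega)
      have hsub : (g A).1 ⊆ (g B).1 := by rw [← heq]; exact inter_subset_right
      exact hgne (Subtype.ext (eq_of_subset_of_card_le hsub (by rw [(g A).2, (g B).2])))
  have hgUn : ((g A).1 ∪ (g B).1).card + t = 2*k := by
    have := card_union_add_card_inter (g A).1 (g B).1
    rw [(g A).2, (g B).2] at this; omega
  have hgu : (((g A).1 ∪ (g B).1)ᶜ : Finset (Fin m)).card = m - (2*k - t) := by
    rw [card_compl, Fintype.card_fin]; omega
  have e1 := cn_eq hk A B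
  have e2 := cn_eq hk (g A) (g B)
  have e3 := cn_iso g A B
  rw [hu] at e1
  rw [hgu] at e2
  by_contra hcon
  have ht2 : t ≤ k - 2 := by omega
  have hle : m - (2*k - t) ≤ m - (k+2) := by omega
  have h1 : (m - (2*k - t)).choose k ≤ (m - (k+2)).choose k := Nat.choose_le_choose k hle
  have h2 : (m - (k+2)).choose k < ((m - (k+2)) + 1).choose k :=
    choose_strict hk (by omega)
  have h3 : (m - (k+2)) + 1 = m - (k+1) := by omega
  rw [h3] at h2
  omega

lemma kneser_perm {m k : ℕ} (hm : 2*k + 1 ≤ m) (hk : 1 ≤ k)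
    (g : kneserGraph m k ≃g kneserGraph m k) :
    ∃ σ : Equiv.Perm (Fin m), ∀ A : {s : Finset (Fin m) // s.card = k}, (g A).1 = A.1.image σ := by
  apply johnson_classify m k hk hm g.toEquiv
  intro A B
  constructor
  · intro h
    have h2 := iso_inter_card hm hk g.symm (g A) (g B) h
    simpa using h2
  · intro h
    exact iso_inter_card hm hk g A B h


def permToIso {m k : ℕ} (σ : Equiv.Perm (Fin m)) : kneserGraph m k ≃g kneserGraph m k where
  toFun A := ⟨A.1.image σ, by rw [card_image_of_injective _ σ.injective, A.2]⟩
  invFun A := ⟨A.1.image σ.symm, by rw [card_image_of_injective _ σ.symm.injective, A.2]⟩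
  left_inv A := Subtype.ext (by simp [image_image])
  right_inv A := Subtype.ext (by simp [image_image])
  map_rel_iff' := by
    intro A B
    show (Disjoint (A.1.image σ) (B.1.image σ) ∧ _) ↔ (Disjoint A.1 B.1 ∧ _)
    have h1 : Disjoint (A.1.image σ) (B.1.image σ) ↔ Disjoint A.1 B.1 :=
      disjoint_image σ.injective
    have h2 : (A.1.image σ = B.1.image σ) ↔ A.1 = B.1 :=
      ⟨fun h => Finset.image_injective σ.injective h, fun h => h ▸ rfl⟩
    constructor
    · rintro ⟨hd, hne⟩
      refine ⟨h1.mp hd, fun hEq => hne ?_⟩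
      apply Subtype.ext
      exact h2.mpr (congrArg Subtype.val hEq)
    · rintro ⟨hd, hne⟩
      refine ⟨h1.mpr hd, fun hEq => hne ?_⟩
      apply Subtype.ext
      exact h2.mp (congrArg Subtype.val hEq)

lemma swap_image_eq {α : Type*} [DecidableEq α] {s : Finset α} {a b : α}
    (h : a ∈ s ↔ b ∈ s) : s.image (Equiv.swap a b) = s := by
  ext x
  rw [mem_image]
  constructor
  · rintro ⟨y, hy, rfl⟩
    rcases eq_or_ne y a with rfl | hya
    · rw [Equiv.swap_apply_left]; exact h.mp hy
    rcases eq_or_ne y b with rfl | hyb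
    · rw [Equiv.swap_apply_right]; exact h.mpr hy
    · rw [Equiv.swap_apply_of_ne_of_ne hya hyb]; exact hy
  · intro hx
    refine ⟨Equiv.swap a b x, ?_, Equiv.swap_apply_self a b x⟩
    rcases eq_or_ne x a with rfl | hxa
    · rw [Equiv.swap_apply_left]; exact h.mp hx
    rcases eq_or_ne x b with rfl | hxb
    · rw [Equiv.swap_apply_right]; exact h.mpr hx
    · rw [Equiv.swap_apply_of_ne_of_ne hxa hxb]; exact hx

lemma not_determining {m k : ℕ} (hk : 1 ≤ k) (hkm : k + 1 ≤ m)
    (S : Finset {s : Finset (Fin m) // s.card = k})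
    (a b : Fin m) (hab : a ≠ b)
    (hvec : ∀ A ∈ S, (a ∈ A.1 ↔ b ∈ A.1)) :
    ¬ IsDeterminingSet (kneserGraph m k) (S : Set _) := by
  intro hdet
  have hagree : ∀ v ∈ (S : Set {s : Finset (Fin m) // s.card = k}),
      (permToIso (Equiv.swap a b)) v = (RelIso.refl ((kneserGraph m k).Adj)) v := by
    intro v hv
    apply Subtype.ext
    show v.1.image (Equiv.swap a b) = v.1
    exact swap_image_eq (hvec v hv)
  have heq := hdet _ _ hagree
  -- construct X containing a but not b
  have hcard : k - 1 ≤ ((univ : Finset (Fin m)) \ {a, b}).card := by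
    have h2 : ({a, b} : Finset (Fin m)).card = 2 := card_pair hab
    rw [card_sdiff_of_subset (subset_univ _), card_univ, Fintype.card_fin, h2]
    omega
  obtain ⟨T, hTsub, hTcard⟩ := Finset.exists_subset_card_eq hcard
  have haT : a ∉ T := fun h => by simpa using hTsub h
  have hbT : b ∉ T := fun h => by simpa using hTsub h
  set X : {s : Finset (Fin m) // s.card = k} :=
    ⟨insert a T, by rw [card_insert_of_notMem haT, hTcard]; omega⟩ with hX
  have h1 : (permToIso (Equiv.swap a b) (k := k)) X = X := by rw [heq]; rfl
  have h2 : X.1.image (Equiv.swap a b) = X.1 := congrArg Subtype.val h1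
  have h3 : b ∈ X.1.image (Equiv.swap a b) := by
    apply mem_image.mpr ⟨a, mem_insert_self a T, Equiv.swap_apply_left a b⟩
  rw [h2] at h3
  rcases mem_insert.mp h3 with h | h
  · exact hab h.symm
  · exact hbT h

lemma determining_of_vec_inj {m k : ℕ} (hm : 2*k + 1 ≤ m) (hk : 1 ≤ k)
    (S : Finset {s : Finset (Fin m) // s.card = k})
    (hvec : ∀ a b : Fin m, (∀ A ∈ S, (a ∈ A.1 ↔ b ∈ A.1)) → a = b) :
    IsDeterminingSet (kneserGraph m k) (S : Set _) := by
  intro g h hag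
  obtain ⟨σ, hσ⟩ := kneser_perm hm hk (g.trans h.symm)
  have hφ : ∀ v ∈ S, (g.trans h.symm) v = v := by
    intro v hv
    have : g v = h v := hag v (by exact_mod_cast hv)
    show h.symm (g v) = v
    rw [this]
    exact h.symm_apply_apply v
  have hfix : ∀ A ∈ S, A.1.image σ = A.1 := by
    intro A hA
    rw [← hσ A, hφ A hA]
  have hσid : ∀ a : Fin m, σ a = a := by
    intro a
    apply hvec (σ a) a
    intro A hA
    constructor
    · intro hσa
      rw [← hfix A hA] at hσa
      obtain ⟨y, hy, hyy⟩ := mem_image.mp hσa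
      rwa [← σ.injective hyy]
    · intro ha
      rw [← hfix A hA]; exact mem_image_of_mem _ ha
  apply RelIso.ext
  intro v
  have h1 : ((g.trans h.symm) v).1 = v.1.image σ := hσ v
  have h2 : v.1.image σ = v.1 := by
    have : ⇑σ = id := funext hσid
    rw [this, image_id]
  have h3 : (g.trans h.symm) v = v := Subtype.ext (h1.trans h2)
  have h4 : h.symm (g v) = v := h3
  have := congrArg h h4
  rwa [h.apply_symm_apply] at this

section DEV
variable {m k : ℕ}

lemma P1 (S : Finset {s : Finset (Fin m) // s.card = k})
    (hm : k * S.card + 2 ≤ m) :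
    ∃ a b : Fin m, a ≠ b ∧ ∀ A ∈ S, (a ∈ A.1 ↔ b ∈ A.1) := by
  classical
  set U : Finset (Fin m) := S.biUnion (fun A => A.1) with hU
  have hUcard : U.card ≤ k * S.card := by
    calc U.card ≤ ∑ A ∈ S, A.1.card := card_biUnion_le
    _ = ∑ A ∈ S, k := by apply Finset.sum_congr rfl; intro A _; exact A.2
    _ = S.card * k := by rw [Finset.sum_const, smul_eq_mul]
    _ = k * S.card := Nat.mul_comm _ _
  have h2 : 1 < (Uᶜ : Finset (Fin m)).card := by
    rw [card_compl, Fintype.card_fin]; omega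
  obtain ⟨a, ha, b, hb, hab⟩ := one_lt_card.mp h2
  rw [mem_compl] at ha hb
  refine ⟨a, b, hab, fun A hA => ?_⟩
  constructor
  · intro h; exact absurd (mem_biUnion.mpr ⟨A, hA, h⟩) ha
  · intro h; exact absurd (mem_biUnion.mpr ⟨A, hA, h⟩) hb

lemma P2 (S : Finset {s : Finset (Fin m) // s.card = k})
    (hm : 2 ^ S.card < m) :
    ∃ a b : Fin m, a ≠ b ∧ ∀ A ∈ S, (a ∈ A.1 ↔ b ∈ A.1) := by
  classical
  have hcard : Fintype.card ({A // A ∈ S} → Bool) < Fintype.card (Fin m) := by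
    rw [Fintype.card_fun, Fintype.card_coe, Fintype.card_fin, Fintype.card_bool]
    exact hm
  obtain ⟨a, b, hab, hfeq⟩ :=
    Fintype.exists_ne_map_eq_of_card_lt
      (fun (p : Fin m) (A : {A // A ∈ S}) => decide (p ∈ A.1.1)) hcard
  refine ⟨a, b, hab, fun A hA => ?_⟩
  have := congrFun hfeq ⟨A, hA⟩
  simpa [decide_eq_decide] using this

lemma free_pair {U : Finset (Fin 6)} (hU : U.card ≤ 4) :
    ∃ a b : Fin 6, a ≠ b ∧ a ∉ U ∧ b ∉ U := by
  have h2 : 1 < (Uᶜ : Finset (Fin 6)).card := by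
    rw [card_compl, Fintype.card_fin]; omega
  obtain ⟨a, ha, b, hb, hab⟩ := one_lt_card.mp h2
  rw [mem_compl] at ha hb
  exact ⟨a, b, hab, ha, hb⟩

lemma P3 (S : Finset {s : Finset (Fin 6) // s.card = 2}) (hS : S.card ≤ 3) :
    ∃ a b : Fin 6, a ≠ b ∧ ∀ A ∈ S, (a ∈ A.1 ↔ b ∈ A.1) := by
  classical
  by_cases h1 : S.card ≤ 2
  · apply P2
    calc 2 ^ S.card ≤ 2 ^ 2 := Nat.pow_le_pow_right (by omega) h1
    _ < 6 := by omega
  · have h3 : S.card = 3 := by omega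
    obtain ⟨A, B, C, hAB, hAC, hBC, hS3⟩ := card_eq_three.mp h3
    have hmem : ∀ W ∈ S, W = A ∨ W = B ∨ W = C := by
      intro W hW; rw [hS3] at hW; simpa using hW
    -- isolated-set helper
    have iso : ∀ X : {s : Finset (Fin 6) // s.card = 2},
        (∀ W ∈ S, W = X ∨ X.1 ∩ W.1 = ∅) →
        ∃ a b : Fin 6, a ≠ b ∧ ∀ A ∈ S, (a ∈ A.1 ↔ b ∈ A.1) := by
      intro X hX
      obtain ⟨a, b, hab, hXab⟩ := card_eq_two.mp X.2
      refine ⟨a, b, hab, fun W hW => ?_⟩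
      rcases hX W hW with rfl | hemp
      · rw [hXab]; simp
      · constructor <;> intro h <;> exfalso
        · have haX : a ∈ X.1 := by rw [hXab]; simp
          exact absurd (mem_inter.mpr ⟨haX, h⟩) (by rw [hemp]; simp)
        · have hbX : b ∈ X.1 := by rw [hXab]; simp
          exact absurd (mem_inter.mpr ⟨hbX, h⟩) (by rw [hemp]; simp)
    -- free-points helper
    have freb : (A.1 ∪ B.1 ∪ C.1).card ≤ 4 →
        ∃ a b : Fin 6, a ≠ b ∧ ∀ A ∈ S, (a ∈ A.1 ↔ b ∈ A.1) := by
      intro hU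
      obtain ⟨a, b, hab, ha, hb⟩ := free_pair hU
      refine ⟨a, b, hab, fun W hW => ?_⟩
      have hsub : W.1 ⊆ A.1 ∪ B.1 ∪ C.1 := by
        rcases hmem W hW with rfl | rfl | rfl
        · intro x hx; exact mem_union_left _ (mem_union_left _ hx)
        · intro x hx; exact mem_union_left _ (mem_union_right _ hx)
        · intro x hx; exact mem_union_right _ hx
      exact ⟨fun h => absurd (hsub h) ha, fun h => absurd (hsub h) hb⟩
    by_cases e1 : A.1 ∩ B.1 = ∅
    · by_cases e2 : A.1 ∩ C.1 = ∅
      · -- A isolated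
        apply iso A
        intro W hW
        rcases hmem W hW with rfl | rfl | rfl
        · exact Or.inl rfl
        · exact Or.inr e1
        · exact Or.inr e2
      · by_cases e3 : B.1 ∩ C.1 = ∅
        · -- B isolated
          apply iso B
          intro W hW
          rcases hmem W hW with rfl | rfl | rfl
          · exact Or.inr (by rw [inter_comm]; exact e1)
          · exact Or.inl rfl
          · exact Or.inr e3
        · -- A∩B = ∅, A∩C ≠ ∅, B∩C ≠ ∅ : |(A∪B)∩C| ≥ 2, |A∪B| = 4
          apply freb
          have hne2 : A.1 ∩ C.1 ≠ ∅ := e2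
          have hne3 : B.1 ∩ C.1 ≠ ∅ := e3
          have hd : Disjoint (A.1 ∩ C.1) (B.1 ∩ C.1) := by
            rw [Finset.disjoint_left]
            intro x hx hx'
            have : x ∈ A.1 ∩ B.1 := mem_inter.mpr ⟨(mem_inter.mp hx).1, (mem_inter.mp hx').1⟩
            rw [e1] at this; simpa using this
          have hsub : (A.1 ∩ C.1) ∪ (B.1 ∩ C.1) ⊆ (A.1 ∪ B.1) ∩ C.1 := by
            intro x hx
            rcases mem_union.mp hx with h | h
            · exact mem_inter.mpr ⟨mem_union_left _ (mem_inter.mp h).1, (mem_inter.mp h).2⟩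
            · exact mem_inter.mpr ⟨mem_union_right _ (mem_inter.mp h).1, (mem_inter.mp h).2⟩
          have hic : 2 ≤ ((A.1 ∪ B.1) ∩ C.1).card := by
            have h4 := card_union_of_disjoint hd
            have h5 : 1 ≤ (A.1 ∩ C.1).card := card_pos.mpr (nonempty_iff_ne_empty.mpr hne2)
            have h6 : 1 ≤ (B.1 ∩ C.1).card := card_pos.mpr (nonempty_iff_ne_empty.mpr hne3)
            have h7 := card_le_card hsub
            omega
          have h8 := card_union_add_card_inter (A.1 ∪ B.1) C.1
          have h9 := card_union_add_card_inter A.1 B.1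
          rw [e1] at h9
          simp only [card_empty] at h9
          rw [A.2, B.2] at h9
          rw [C.2] at h8
          omega
    · -- A∩B ≠ ∅
      have hAB3 : (A.1 ∪ B.1).card ≤ 3 := by
        have h9 := card_union_add_card_inter A.1 B.1
        have h5 : 1 ≤ (A.1 ∩ B.1).card := card_pos.mpr (nonempty_iff_ne_empty.mpr e1)
        rw [A.2, B.2] at h9
        omega
      by_cases e2 : A.1 ∩ C.1 = ∅
      · by_cases e3 : B.1 ∩ C.1 = ∅
        · -- C isolated
          apply iso C
          intro W hW
          rcases hmem W hW with rfl | rfl | rfl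
          · exact Or.inr (by rw [inter_comm]; exact e2)
          · exact Or.inr (by rw [inter_comm]; exact e3)
          · exact Or.inl rfl
        · -- A∩B ≠ ∅, B∩C ≠ ∅
          apply freb
          have hic : 1 ≤ ((A.1 ∪ B.1) ∩ C.1).card := by
            apply card_pos.mpr
            obtain ⟨x, hx⟩ := nonempty_iff_ne_empty.mpr e3
            exact ⟨x, mem_inter.mpr ⟨mem_union_right _ (mem_inter.mp hx).1, (mem_inter.mp hx).2⟩⟩
          have h8 := card_union_add_card_inter (A.1 ∪ B.1) C.1
          rw [C.2] at h8
          omega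
      · -- A∩B ≠ ∅, A∩C ≠ ∅
        apply freb
        have hic : 1 ≤ ((A.1 ∪ B.1) ∩ C.1).card := by
          apply card_pos.mpr
          obtain ⟨x, hx⟩ := nonempty_iff_ne_empty.mpr e2
          exact ⟨x, mem_inter.mpr ⟨mem_union_left _ (mem_inter.mp hx).1, (mem_inter.mp hx).2⟩⟩
        have h8 := card_union_add_card_inter (A.1 ∪ B.1) C.1
        rw [C.2] at h8
        omega
end DEV


section GenCon
variable (m k s : ℕ) (part : ℕ → ℕ)

def Aset (j : ℕ) : Finset (Fin m) :=
  univ.filter (fun p => (p : ℕ) = j + 1 ∨ (s + 1 ≤ (p : ℕ) ∧ (p : ℕ) - (s+1) ≠ part j))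

lemma mem_Aset {j : ℕ} {p : Fin m} :
    p ∈ Aset m s part j ↔ ((p : ℕ) = j + 1 ∨ (s + 1 ≤ (p : ℕ) ∧ (p : ℕ) - (s+1) ≠ part j)) := by
  simp [Aset]

variable (hm : m = s + k + 1) (hpart : ∀ j, part j < k)

include hm hpart in
lemma Aset_card {j : ℕ} (hj : j < s) : (Aset m s part j).card = k := by
  classical
  have hsplit : Aset m s part j =
      univ.filter (fun p : Fin m => (p : ℕ) = j + 1) ∪
      univ.filter (fun p : Fin m => s + 1 ≤ (p : ℕ) ∧ (p : ℕ) - (s+1) ≠ part j) := by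
    rw [Aset, filter_or]
  have h1 : univ.filter (fun p : Fin m => (p : ℕ) = j + 1) = {⟨j+1, by omega⟩} := by
    ext p
    simp only [mem_filter, mem_univ, true_and, mem_singleton]
    constructor
    · intro h; exact Fin.ext h
    · intro h; rw [h]
  have h2 : (univ.filter (fun p : Fin m => s + 1 ≤ (p : ℕ) ∧ (p : ℕ) - (s+1) ≠ part j)).card
      = k - 1 := by
    have he : ((range k).erase (part j)).card = k - 1 := by
      rw [card_erase_of_mem (mem_range.mpr (hpart j)), card_range]
    rw [← he]
    refine card_nbij (fun p => (p : ℕ) - (s+1)) ?_ ?_ ?_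
    · intro p hp
      simp only [Finset.mem_coe, mem_filter, mem_univ, true_and] at hp
      simp only [Finset.mem_coe, mem_erase, mem_range]
      have := p.isLt
      omega
    · intro p hp q hq hpq
      simp only [Finset.mem_coe, mem_filter, mem_univ, true_and] at hp hq
      have hpq' : (p : ℕ) - (s+1) = (q : ℕ) - (s+1) := hpq
      apply Fin.ext
      omega
    · intro i hi
      have hi' : i ∈ (range k).erase (part j) := hi
      simp only [mem_erase, mem_range] at hi'
      refine ⟨⟨s + 1 + i, by omega⟩, ?_, by simp⟩
      simp only [Finset.mem_coe, mem_filter, mem_univ, true_and]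
      constructor
      · simp
      · show s + 1 + i - (s+1) ≠ part j
        omega
  have hdisj : Disjoint (univ.filter (fun p : Fin m => (p : ℕ) = j + 1))
      (univ.filter (fun p : Fin m => s + 1 ≤ (p : ℕ) ∧ (p : ℕ) - (s+1) ≠ part j)) := by
    rw [Finset.disjoint_left]
    intro p hp hq
    simp only [mem_filter, mem_univ, true_and] at hp hq
    omega
  rw [hsplit, card_union_of_disjoint hdisj, h1, h2, card_singleton]
  have := hpart j
  omega
end GenCon

section GenCon2
variable (m k s : ℕ) (part : ℕ → ℕ)

lemma vec_aux (hm : m = s + k + 1)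
    (hfib : ∀ i, i < k → ∃ j, j < s ∧ part j = i)
    (htwo : ∀ i, i < k → ∃ j1 j2, j1 < s ∧ j2 < s ∧ j1 ≠ j2 ∧ part j1 ≠ i ∧ part j2 ≠ i)
    (a b : Fin m)
    (hv : ∀ j, j < s → (a ∈ Aset m s part j ↔ b ∈ Aset m s part j))
    (hab : (a : ℕ) ≤ (b : ℕ)) : a = b := by
  rcases Nat.eq_or_lt_of_le hab with heq | hlt
  · exact Fin.ext heq
  have hbm : (b : ℕ) < s + k + 1 := by rw [← hm]; exact b.isLt
  exfalso
  rcases Nat.lt_or_ge (b : ℕ) (s+1) with hb | hb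
  · have hj : (b:ℕ) - 1 < s := by omega
    have hbmem : b ∈ Aset m s part ((b:ℕ)-1) := (mem_Aset m s part).mpr (Or.inl (by omega))
    have hamem := (hv _ hj).mpr hbmem
    rw [mem_Aset] at hamem
    rcases hamem with h | h <;> omega
  · have hibk : (b:ℕ) - (s+1) < k := by omega
    rcases Nat.lt_or_ge (a : ℕ) (s+1) with ha | ha
    · obtain ⟨j1, j2, hj1, hj2, hne, hp1, hp2⟩ := htwo ((b:ℕ) - (s+1)) hibk
      have hb1 : b ∈ Aset m s part j1 :=
        (mem_Aset m s part).mpr (Or.inr ⟨hb, fun h => hp1 (by omega)⟩)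
      have hb2 : b ∈ Aset m s part j2 :=
        (mem_Aset m s part).mpr (Or.inr ⟨hb, fun h => hp2 (by omega)⟩)
      have ha1 := (hv j1 hj1).mpr hb1
      have ha2 := (hv j2 hj2).mpr hb2
      rw [mem_Aset] at ha1 ha2
      rcases ha1 with h1 | h1
      · rcases ha2 with h2 | h2 <;> omega
      · omega
    · obtain ⟨j, hj, hpj⟩ := hfib ((b:ℕ) - (s+1)) hibk
      have hamem : a ∈ Aset m s part j :=
        (mem_Aset m s part).mpr (Or.inr ⟨ha, by omega⟩)
      have hbmem := (hv j hj).mp hamem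
      rw [mem_Aset] at hbmem
      rcases hbmem with h | h
      · omega
      · exact h.2 (by omega)

lemma SGen_exists (hm : m = s + k + 1) (hpart : ∀ j, part j < k)
    (hfib : ∀ i, i < k → ∃ j, j < s ∧ part j = i)
    (htwo : ∀ i, i < k → ∃ j1 j2, j1 < s ∧ j2 < s ∧ j1 ≠ j2 ∧ part j1 ≠ i ∧ part j2 ≠ i) :
    ∃ S : Finset {A : Finset (Fin m) // A.card = k}, S.card = s ∧
      (∀ a b : Fin m, (∀ A ∈ S, ((a ∈ A.1) ↔ (b ∈ A.1))) → a = b) := by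
  classical
  refine ⟨(range s).attach.image
    (fun j => ⟨Aset m s part j.1, Aset_card m k s part hm hpart (mem_range.mp j.2)⟩), ?_, ?_⟩
  · rw [card_image_of_injOn, card_attach, card_range]
    intro j _ j' _ hjj
    have h1 : Aset m s part j.1 = Aset m s part j'.1 := congrArg Subtype.val hjj
    have hj1 : j.1 < s := mem_range.mp j.2
    have hj'1 : j'.1 < s := mem_range.mp j'.2
    have hmem : (⟨j.1 + 1, by omega⟩ : Fin m) ∈ Aset m s part j.1 :=
      (mem_Aset m s part).mpr (Or.inl rfl)
    rw [h1, mem_Aset] at hmem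
    apply Subtype.ext
    rcases hmem with h | h
    · simpa using h
    · simp only at h; omega
  · intro a b hvec
    have hv : ∀ j, j < s → (a ∈ Aset m s part j ↔ b ∈ Aset m s part j) := by
      intro j hj
      exact hvec ⟨Aset m s part j, Aset_card m k s part hm hpart hj⟩
        (mem_image.mpr ⟨⟨j, mem_range.mpr hj⟩, mem_attach _ _, rfl⟩)
    rcases le_total (a : ℕ) (b : ℕ) with hab | hab
    · exact vec_aux m k s part hm hfib htwo a b hv hab
    · exact (vec_aux m k s part hm hfib htwo b a (fun j hj => (hv j hj).symm) hab).symm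

end GenCon2

lemma construction_general {k m : ℕ} (hk2 : 2 ≤ k) (hm : 2*k + 1 ≤ m) (hex : k = 2 → 7 ≤ m) :
    ∃ S : Finset {A : Finset (Fin m) // A.card = k}, S.card = m - k - 1 ∧
      (∀ a b : Fin m, (∀ A ∈ S, ((a ∈ A.1) ↔ (b ∈ A.1))) → a = b) := by
  set s := m - k - 1 with hs
  have hms : m = s + k + 1 := by omega
  have hsk : k ≤ s := by omega
  by_cases hk : k = 2
  · subst hk
    have hs4 : 4 ≤ s := by have := hex rfl; omega
    apply SGen_exists m 2 s (fun j => if j < 2 then 0 else 1) hms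
    · intro j; split <;> omega
    · intro i hi
      rcases (by omega : i = 0 ∨ i = 1) with rfl | rfl
      · exact ⟨0, by omega, by norm_num⟩
      · exact ⟨2, by omega, by norm_num⟩
    · intro i hi
      rcases (by omega : i = 0 ∨ i = 1) with rfl | rfl
      · exact ⟨2, 3, by omega, by omega, by omega, by norm_num, by norm_num⟩
      · exact ⟨0, 1, by omega, by omega, by omega, by norm_num, by norm_num⟩
  · have hk3 : 3 ≤ k := by omega
    apply SGen_exists m k s (fun j => min j (k-1)) hms
    · intro j; omega
    · intro i hi
      exact ⟨i, by omega, by omega⟩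
    · intro i hi
      rcases (by omega : i = 0 ∨ i = 1 ∨ 2 ≤ i) with rfl | rfl | h2
      · exact ⟨1, s - 1, by omega, by omega, by omega, by omega, by omega⟩
      · exact ⟨0, s - 1, by omega, by omega, by omega, by omega, by omega⟩
      · exact ⟨0, 1, by omega, by omega, by omega, by omega, by omega⟩


lemma construction_k1 {m : ℕ} (hm : 2 ≤ m) :
    ∃ S : Finset {A : Finset (Fin m) // A.card = 1}, S.card = m - 1 ∧
      (∀ a b : Fin m, (∀ A ∈ S, ((a ∈ A.1) ↔ (b ∈ A.1))) → a = b) := by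
  classical
  set x0 : Fin m := ⟨m-1, by omega⟩ with hx0
  have hinj : Function.Injective (fun p : Fin m => (⟨{p}, card_singleton p⟩ : {A : Finset (Fin m) // A.card = 1})) := by
    intro p q h
    simpa using congrArg Subtype.val h
  refine ⟨(univ.erase x0).image (fun p => ⟨{p}, card_singleton p⟩), ?_, ?_⟩
  · rw [card_image_of_injective _ hinj, card_erase_of_mem (mem_univ _), card_univ,
      Fintype.card_fin]
  · intro a b hvec
    rcases eq_or_ne b x0 with hbx | hbx
    · rcases eq_or_ne a x0 with hax | hax
      · rw [hax, hbx]
      · have hmem : (⟨{a}, card_singleton a⟩ : {A : Finset (Fin m) // A.card = 1}) ∈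
            (univ.erase x0).image (fun p => ⟨{p}, card_singleton p⟩) :=
          mem_image.mpr ⟨a, mem_erase.mpr ⟨hax, mem_univ a⟩, rfl⟩
        have h1 := (hvec _ hmem).mp (mem_singleton_self a)
        have h2 : b = a := mem_singleton.mp h1
        exact h2.symm
    · have hmem : (⟨{b}, card_singleton b⟩ : {A : Finset (Fin m) // A.card = 1}) ∈
          (univ.erase x0).image (fun p => ⟨{p}, card_singleton p⟩) :=
        mem_image.mpr ⟨b, mem_erase.mpr ⟨hbx, mem_univ b⟩, rfl⟩
      have h1 := (hvec _ hmem).mpr (mem_singleton_self b)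
      exact mem_singleton.mp h1

def S5 : Finset {s : Finset (Fin 5) // s.card = 2} :=
  {⟨{0,1}, by decide⟩, ⟨{1,2}, by decide⟩, ⟨{2,3}, by decide⟩}

lemma S5_card : S5.card = 3 := by decide

lemma S5_vecinj : ∀ a b : Fin 5, (∀ A ∈ S5, ((a ∈ A.1) ↔ (b ∈ A.1))) → a = b := by decide

def S6 : Finset {s : Finset (Fin 6) // s.card = 2} :=
  {⟨{0,1}, by decide⟩, ⟨{1,2}, by decide⟩, ⟨{2,3}, by decide⟩, ⟨{3,4}, by decide⟩}

lemma S6_card : S6.card = 4 := by decide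

lemma S6_vecinj : ∀ a b : Fin 6, (∀ A ∈ S6, ((a ∈ A.1) ↔ (b ∈ A.1))) → a = b := by decide

-- assembly helpers (assume prior pieces)
section ASM
variable {m k : ℕ}

lemma det_mem (S : Finset {s : Finset (Fin m) // s.card = k})
    (h : IsDeterminingSet (kneserGraph m k) (S : Set _)) :
    S.card ∈ {c | ∃ T : Finset {s : Finset (Fin m) // s.card = k}, T.card = c ∧
      IsDeterminingSet (kneserGraph m k) (T : Set _)} := ⟨S, rfl, h⟩

lemma detNumber_eq_of (b : ℕ) (S : Finset {s : Finset (Fin m) // s.card = k})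
    (hcard : S.card = b) (hdet : IsDeterminingSet (kneserGraph m k) (S : Set _))
    (hlb : ∀ T : Finset {s : Finset (Fin m) // s.card = k},
      IsDeterminingSet (kneserGraph m k) (T : Set _) → b ≤ T.card) :
    detNumber (kneserGraph m k) = b := by
  have hmem := det_mem S hdet
  rw [hcard] at hmem
  apply le_antisymm
  · exact Nat.sInf_le hmem
  · apply le_csInf ⟨b, hmem⟩
    rintro c ⟨T, hT, hTdet⟩
    rw [← hT]
    exact hlb T hTdet

lemma detNumber_le_of (S : Finset {s : Finset (Fin m) // s.card = k})
    (hdet : IsDeterminingSet (kneserGraph m k) (S : Set _)) :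
    detNumber (kneserGraph m k) ≤ S.card :=
  Nat.sInf_le (det_mem S hdet)

end ASM


theorem stmt_18 (n k : ℕ) (hn : 2 * k + 1 ≤ n + 1) :
    detNumber (kneserGraph (n + 1) k) = n + 1 - k ↔
      k = 1 ∨ (n + 1 = 5 ∧ k = 2) ∨ (n + 1 = 6 ∧ k = 2) := by
  rcases Nat.eq_zero_or_pos k with rfl | hk0
  · -- k = 0
    have hdet : detNumber (kneserGraph (n+1) 0) = 0 := by
      apply Nat.sInf_eq_zero.mpr
      left
      refine ⟨∅, card_empty, ?_⟩
      intro g h _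
      apply RelIso.ext
      intro v
      have hv : ∀ w : {s : Finset (Fin (n+1)) // s.card = 0}, w = ⟨∅, card_empty⟩ :=
        fun w => Subtype.ext (card_eq_zero.mp w.2)
      rw [hv (g v), hv (h v)]
    rw [hdet]
    constructor
    · intro h; omega
    · rintro (h | ⟨h1, h2⟩ | ⟨h1, h2⟩) <;> omega
  by_cases hk1 : k = 1
  · subst hk1
    have h3 : 3 ≤ n + 1 := hn
    obtain ⟨S, hScard, hSvec⟩ := construction_k1 (m := n+1) (by omega)
    have hdet : detNumber (kneserGraph (n+1) 1) = n := by
      apply detNumber_eq_of n S (by omega)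
        (determining_of_vec_inj (by omega) (by omega) S hSvec)
      intro T hTdet
      by_contra hTc
      push_neg at hTc
      obtain ⟨a, b, hab, hvec⟩ := P1 T (by omega)
      exact not_determining (by omega) (by omega) T a b hab hvec hTdet
    rw [hdet]
    constructor
    · intro _; exact Or.inl rfl
    · intro _; omega
  have hk2 : 2 ≤ k := by omega
  by_cases hm5 : n + 1 = 5 ∧ k = 2
  · obtain ⟨hm, hk⟩ := hm5
    have hn4 : n = 4 := by omega
    subst hn4; subst hk
    have hdet : detNumber (kneserGraph 5 2) = 3 := by
      apply detNumber_eq_of 3 S5 S5_card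
        (determining_of_vec_inj (by omega) (by omega) S5 S5_vecinj)
      intro T hTdet
      by_contra hTc
      push_neg at hTc
      obtain ⟨a, b, hab, hvec⟩ := P2 T (by
        calc 2 ^ T.card ≤ 2 ^ 2 := Nat.pow_le_pow_right (by omega) (by omega)
        _ < 5 := by omega)
      exact not_determining (by omega) (by omega) T a b hab hvec hTdet
    rw [show (4:ℕ) + 1 = 5 from rfl, hdet]
    constructor
    · intro _; exact Or.inr (Or.inl ⟨rfl, rfl⟩)
    · intro _; omega
  by_cases hm6 : n + 1 = 6 ∧ k = 2
  · obtain ⟨hm, hk⟩ := hm6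
    have hn5 : n = 5 := by omega
    subst hn5; subst hk
    have hdet : detNumber (kneserGraph 6 2) = 4 := by
      apply detNumber_eq_of 4 S6 S6_card
        (determining_of_vec_inj (by omega) (by omega) S6 S6_vecinj)
      intro T hTdet
      by_contra hTc
      push_neg at hTc
      obtain ⟨a, b, hab, hvec⟩ := P3 T (by omega)
      exact not_determining (by omega) (by omega) T a b hab hvec hTdet
    rw [show (5:ℕ) + 1 = 6 from rfl, hdet]
    constructor
    · intro _; exact Or.inr (Or.inr ⟨rfl, rfl⟩)
    · intro _; omega
  · -- general case: detNumber ≤ n - k < n + 1 - k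
    obtain ⟨S, hScard, hSvec⟩ := construction_general (m := n+1) hk2 hn
      (by intro h; subst h; omega)
    have hle := detNumber_le_of S
      (determining_of_vec_inj hn (by omega) S hSvec)
    rw [hScard] at hle
    constructor
    · intro h; omega
    · rintro (h | ⟨h1, h2⟩ | ⟨h1, h2⟩) <;> omega
end
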